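/- arXiv:1103.1437 — 11 statements merged into one kernel-verified Lean document; each statement's English description precedes it below -/
import Mathlib

section
/- Let a > 1 be an integer and n ≥ 7. Then there exists a prime p dividing a^n - 1 that does not divide a^m - 1 for any 1 ≤ m < n; moreover any such prime p satisfies p ≡ 1 (mod n). -/
open Polynomial Finset

lemma dvd_pow_sub_one_iff {p a m : ℕ} (ha : 0 < a) :
    p ∣ a ^ m - 1 ↔ ((a : ZMod p)) ^ m = 1 := by
  have h1 : (1:ℕ) ≤ a ^ m := Nat.one_le_pow _ _ ha
  rw [← ZMod.natCast_eq_zero_iff, Nat.cast_sub h1]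
  push_cast
  rw [sub_eq_zero, eq_comm]

lemma cyclo_order {a n p : ℕ} (hn : 0 < n) (hp : p.Prime)
    (hΦ : (p:ℤ) ∣ (cyclotomic n ℤ).eval (a:ℤ)) :
    IsPrimitiveRoot (a : ZMod p) (n / p ^ n.factorization p) := by
  haveI : Fact p.Prime := ⟨hp⟩
  have hm : ¬ p ∣ n / p ^ n.factorization p := Nat.not_dvd_ordCompl hp hn.ne'
  haveI : NeZero ((n / p ^ n.factorization p : ℕ) : ZMod p) :=
    ⟨by rwa [Ne, ZMod.natCast_eq_zero_iff]⟩
  have hroot : IsRoot (cyclotomic (p ^ n.factorization p * (n / p ^ n.factorization p)) (ZMod p))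
      ((a : ℤ) : ZMod p) := by
    rw [Nat.ordProj_mul_ordCompl_eq_self]
    have : (((cyclotomic n ℤ).eval (a:ℤ) : ℤ) : ZMod p) = 0 := by
      rwa [ZMod.intCast_zmod_eq_zero_iff_dvd]
    rwa [IsRoot.def, ← map_cyclotomic_int n (ZMod p), eval_intCast_map, Int.coe_castRingHom]
  rw [isRoot_cyclotomic_prime_pow_mul_iff_of_charP] at hroot
  simpa using hroot

lemma one_add_sq_zero_pow {R : Type*} [CommRing R] (y : R) (hy : y^2 = 0) (j : ℕ) :
    (1 + y)^j = 1 + j * y := by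
  induction j with
  | zero => simp
  | succ j ih =>
    have h1 : (1+y)^(j+1) = (1+y)^j * (1+y) := by ring
    rw [h1, ih]
    have h2 : (1 + (j:R) * y) * (1 + y) = 1 + ((j:ℕ)+1 : R) * y + (j:R) * y^2 := by ring
    rw [h2, hy]
    push_cast
    ring

lemma geom_sum_not_sq_dvd_odd {p : ℕ} (hp : p.Prime) (hodd : p % 2 = 1) {x : ℤ}
    (hx : (p:ℤ) ∣ x - 1) : ¬ ((p:ℤ)^2 ∣ ∑ j ∈ range p, x^j) := by
  intro hdvd
  obtain ⟨q, hpq⟩ : ∃ q, p = 2*q+1 := ⟨p/2, by omega⟩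
  obtain ⟨c, hc⟩ := hx
  set R := ZMod (p^2) with hR
  have hp2R : ((p:R))^2 = 0 := by
    have h := ZMod.natCast_self (p^2)
    push_cast at h
    exact_mod_cast h
  have hysq : (((p:R)) * (c : R))^2 = 0 := by
    rw [mul_pow, hp2R, zero_mul]
  have hx1 : ((x:R)) = 1 + (p:R) * (c:R) := by
    have hx' : x = 1 + (p:ℤ)*c := by linarith
    rw [hx', Int.cast_add, Int.cast_one, Int.cast_mul, Int.cast_natCast]
  have hS : ((∑ j ∈ range p, x^j : ℤ) : R) = (p : R) := by
    have hpow : ∀ j : ℕ, ((x^j : ℤ) : R) = (1 + (p:R)*(c:R))^j := fun j => by rw [Int.cast_pow, hx1]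
    rw [Int.cast_sum]; simp only [hpow]
    rw [Finset.sum_congr rfl (fun j _ => one_add_sq_zero_pow _ hysq j), Finset.sum_add_distrib]
    simp only [Finset.sum_const, card_range, nsmul_eq_mul, mul_one]
    rw [← Finset.sum_mul]
    have hsum : (∑ j ∈ range p, (j : R)) = ((p * q : ℕ) : R) := by
      rw [← Nat.cast_sum]
      congr 1
      have h2 : (∑ i ∈ range p, i) * 2 = (p*q)*2 := by
        rw [Finset.sum_range_id_mul_two, show p - 1 = 2*q by omega]; ring
      exact Nat.eq_of_mul_eq_mul_right two_pos h2
    rw [hsum]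
    have hz : ((p*q : ℕ) : R) * ((p:R) * (c:R)) = ((q:R) * (c:R)) * ((p:R))^2 := by
      rw [Nat.cast_mul]; ring
    rw [hz, hp2R, mul_zero, add_zero]
  have h0 : ((∑ j ∈ range p, x^j : ℤ) : R) = 0 := by
    rw [ZMod.intCast_zmod_eq_zero_iff_dvd]
    exact_mod_cast hdvd
  rw [hS] at h0
  have hdp : (p^2 : ℕ) ∣ p := by rwa [← ZMod.natCast_eq_zero_iff]
  have := Nat.le_of_dvd hp.pos hdp
  nlinarith [hp.two_le]

lemma cyclo_abs_prod (n : ℕ) (hn : 2 < n) (q : ℝ) :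
    (cyclotomic n ℝ).eval q = ∏ μ ∈ primitiveRoots n ℂ, ‖(q:ℂ) - μ‖ := by
  have hn0 : 0 < n := by omega
  have hζ : IsPrimitiveRoot (Complex.exp (2 * Real.pi * Complex.I / n)) n :=
    Complex.isPrimitiveRoot_exp n hn0.ne'
  have h1 : (((cyclotomic n ℝ).eval q : ℝ) : ℂ) = ∏ μ ∈ primitiveRoots n ℂ, ((q:ℂ) - μ) := by
    have h2 := cyclotomic.eval_apply q n (algebraMap ℝ ℂ)
    simp only [Complex.coe_algebraMap] at h2
    rw [← h2, cyclotomic_eq_prod_X_sub_primitiveRoots hζ, eval_prod]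
    simp
  have h3 : |(cyclotomic n ℝ).eval q| = ∏ μ ∈ primitiveRoots n ℂ, ‖(q:ℂ) - μ‖ := by
    have := congrArg (‖·‖) h1
    rwa [Complex.norm_real, Real.norm_eq_abs, norm_prod] at this
  rw [← h3, abs_of_pos (cyclotomic_pos hn q)]

lemma cyclo_sq_gt (n : ℕ) (hn : 2 < n) {b : ℝ} (hb : 2 ≤ b) :
    (cyclotomic n ℝ).eval (b-1) * (cyclotomic n ℝ).eval (b+1) < ((cyclotomic n ℝ).eval b)^2 := by
  have hn0 : 0 < n := by omega
  have hne : (primitiveRoots n ℂ).Nonempty :=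
    ⟨_, (mem_primitiveRoots hn0).mpr (Complex.isPrimitiveRoot_exp n hn0.ne')⟩
  rw [cyclo_abs_prod n hn, cyclo_abs_prod n hn, cyclo_abs_prod n hn,
    ← Finset.prod_mul_distrib, ← Finset.prod_pow]
  refine Finset.prod_lt_prod_of_nonempty ?_ ?_ hne
  · intro μ hμmem
    have hμ : IsPrimitiveRoot μ n := (mem_primitiveRoots hn0).mp hμmem
    have hnorm : ‖μ‖ = 1 := hμ.norm'_eq_one hn0.ne'
    have hμ1 : μ ≠ 1 := by
      intro h
      rw [h] at hμ
      have := hμ.eq_orderOf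
      simp at this
      omega
    have h1 : ((b-1:ℝ):ℂ) - μ ≠ 0 := by
      intro h
      have : μ = ((b-1:ℝ):ℂ) := by linear_combination -h
      rw [this] at hnorm
      rw [Complex.norm_real, Real.norm_eq_abs, abs_of_nonneg (by linarith)] at hnorm
      apply hμ1
      rw [this, hnorm]
      norm_num
    have h2 : ((b+1:ℝ):ℂ) - μ ≠ 0 := by
      intro h
      have : μ = ((b+1:ℝ):ℂ) := by linear_combination -h
      rw [this] at hnorm
      rw [Complex.norm_real, Real.norm_eq_abs, abs_of_nonneg (by linarith)] at hnorm
      linarith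
    exact mul_pos (norm_pos_iff.mpr h1) (norm_pos_iff.mpr h2)
  · intro μ hμmem
    have hμ : IsPrimitiveRoot μ n := (mem_primitiveRoots hn0).mp hμmem
    have hnorm : Complex.normSq μ = 1 := by
      have h := hμ.norm'_eq_one hn0.ne'
      have := Complex.sq_norm μ
      rw [h] at this
      linarith [this]
    set t := μ.re
    set s := μ.im
    have hts : t^2 + s^2 = 1 := by
      have := Complex.normSq_apply μ
      rw [hnorm] at this  -- 1 = t*t + s*s
      nlinarith [this]
    have ht1 : t ≤ 1 := by nlinarith [sq_nonneg (t-1), sq_nonneg s]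
    have hsq : ∀ x : ℝ, ‖(x:ℂ) - μ‖^2 = (x - t)^2 + s^2 := by
      intro x
      rw [Complex.sq_norm, Complex.normSq_apply]
      simp [t, s]
      ring
    have key : (‖((b-1:ℝ):ℂ) - μ‖ * ‖((b+1:ℝ):ℂ) - μ‖)^2 < (‖((b:ℝ):ℂ) - μ‖^2)^2 := by
      rw [mul_pow, hsq, hsq, hsq]
      nlinarith [sq_nonneg (t-1), mul_nonneg (by linarith : (0:ℝ) ≤ b-2)
        (by linarith : (0:ℝ) ≤ b+2-2*t), sq_nonneg s]
    have hgnn : 0 ≤ ‖((b:ℝ):ℂ) - μ‖^2 := by positivity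
    exact lt_of_pow_lt_pow_left₀ 2 hgnn key

lemma cyclo_sq_gt_int (n : ℕ) (hn : 2 < n) (a : ℕ) (ha : 2 ≤ a) :
    (cyclotomic n ℤ).eval ((a:ℤ)-1) * (cyclotomic n ℤ).eval ((a:ℤ)+1)
      < ((cyclotomic n ℤ).eval (a:ℤ))^2 := by
  have hcast : ∀ x : ℤ, (((cyclotomic n ℤ).eval x : ℤ) : ℝ) = (cyclotomic n ℝ).eval (x:ℝ) := by
    intro x
    have := cyclotomic.eval_apply x n (Int.castRingHom ℝ)
    simp only [Int.coe_castRingHom] at this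
    rw [this]
  have h := cyclo_sq_gt n hn (b := (a:ℝ)) (by exact_mod_cast ha)
  have e1 : ((a:ℝ)) - 1 = (((a:ℤ) - 1 : ℤ) : ℝ) := by push_cast; ring
  have e2 : ((a:ℝ)) + 1 = (((a:ℤ) + 1 : ℤ) : ℝ) := by push_cast; ring
  have e3 : ((a:ℝ)) = (((a:ℤ) : ℤ) : ℝ) := by push_cast; ring
  rw [e1, e2, e3, ← hcast, ← hcast, ← hcast] at h
  exact_mod_cast h
lemma sq_bound_totient : ∀ k : ℕ, (k + 7) ^ 2 ≤ 2 ^ (k + 6) := by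
  intro k
  induction k with
  | zero => norm_num
  | succ k ih =>
    have h1 : 2 ^ (k + 1 + 6) = 2 * 2 ^ (k + 6) := by ring
    have h2 : (k + 1 + 7) ^ 2 ≤ 2 * (k + 7) ^ 2 := by
      have e1 : (k + 1 + 7) ^ 2 = k^2 + 16*k + 64 := by ring
      have e2 : 2 * (k + 7) ^ 2 = 2*k^2 + 28*k + 98 := by ring
      rw [e1, e2]
      linarith [sq_nonneg k]
    have h3 : 2 * (k + 7) ^ 2 ≤ 2 * 2 ^ (k + 6) := Nat.mul_le_mul_left 2 ih
    rw [h1]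
    exact le_trans h2 h3

theorem bang_primitive_divisor (a n : ℕ) (ha : 1 < a) (hn : 7 ≤ n) :
    (∃ p : ℕ, p.Prime ∧ p ∣ a ^ n - 1 ∧
      ∀ m : ℕ, 1 ≤ m → m < n → ¬ p ∣ a ^ m - 1) ∧
    (∀ p : ℕ, p.Prime → p ∣ a ^ n - 1 →
      (∀ m : ℕ, 1 ≤ m → m < n → ¬ p ∣ a ^ m - 1) → p % n = 1) := by
  have hn0 : 0 < n := by omega
  have hn2 : 2 < n := by omega
  have ha0 : 0 < a := by omega
  -- Part 2
  have part2 : ∀ p : ℕ, p.Prime → p ∣ a ^ n - 1 →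
      (∀ m : ℕ, 1 ≤ m → m < n → ¬ p ∣ a ^ m - 1) → p % n = 1 := by
    intro p hp hdvd hprim
    haveI : Fact p.Prime := ⟨hp⟩
    have hα : (a : ZMod p) ^ n = 1 := (dvd_pow_sub_one_iff ha0).mp hdvd
    have hα0 : (a : ZMod p) ≠ 0 := by
      intro h
      rw [h, zero_pow hn0.ne'] at hα
      exact zero_ne_one hα
    have hdord : orderOf (a : ZMod p) ∣ n := orderOf_dvd_of_pow_eq_one hα
    have hordn : orderOf (a : ZMod p) = n := by
      by_contra hne
      have hlt : orderOf (a : ZMod p) < n := lt_of_le_of_ne (Nat.le_of_dvd hn0 hdord) hne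
      have hpos : 0 < orderOf (a : ZMod p) := Nat.pos_of_dvd_of_pos hdord hn0
      exact hprim _ hpos hlt ((dvd_pow_sub_one_iff ha0).mpr (pow_orderOf_eq_one _))
    have hfermat : orderOf (a : ZMod p) ∣ p - 1 :=
      orderOf_dvd_of_pow_eq_one (ZMod.pow_card_sub_one_eq_one hα0)
    rw [hordn] at hfermat
    obtain ⟨c, hc⟩ := hfermat
    have hp2 : 2 ≤ p := hp.two_le
    have hpe : p = n * c + 1 := by omega
    rw [hpe, Nat.mul_add_mod]
    exact Nat.mod_eq_of_lt (by omega)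
  refine ⟨?_, part2⟩
  by_cases hex : ∃ p : ℕ, p.Prime ∧ p ∣ a ^ n - 1 ∧
      ∀ m : ℕ, 1 ≤ m → m < n → ¬ p ∣ a ^ m - 1
  · exact hex
  exfalso
  push_neg at hex
  -- Setup
  set Φℤ : ℤ := (cyclotomic n ℤ).eval (a : ℤ) with hΦdef
  have hΦpos : 0 < Φℤ := cyclotomic_pos hn2 _
  set Φ : ℕ := Φℤ.toNat with hΦnat
  have hΦcast : (Φ : ℤ) = Φℤ := Int.toNat_of_nonneg hΦpos.le
  have hΦdvdℤ : Φℤ ∣ (a : ℤ) ^ n - 1 := by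
    have h1 := cyclotomic.dvd_X_pow_sub_one n ℤ
    have h2 := eval_dvd (x := (a : ℤ)) h1
    simpa using h2
  have hpow1 : 1 ≤ a ^ n := Nat.one_le_pow _ _ ha0
  have hΦdvd : Φ ∣ a ^ n - 1 := by
    have h3 : (Φ : ℤ) ∣ ((a ^ n - 1 : ℕ) : ℤ) := by
      rw [hΦcast, Nat.cast_sub hpow1]
      push_cast
      exact hΦdvdℤ
    exact_mod_cast h3
  -- Φ ≥ 2
  have hΦ2 : 2 ≤ Φ := by
    have h4 := Polynomial.sub_one_pow_totient_lt_natAbs_cyclotomic_eval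
      (n := n) (q := a) (by omega) (by omega)
    have h5 : ((cyclotomic n ℤ).eval ((a : ℕ) : ℤ)).natAbs = Φ := by
      rw [← hΦdef, ← hΦcast]
      simp
    rw [h5] at h4
    have h6 : 1 ≤ (a - 1) ^ n.totient := Nat.one_le_pow _ _ (by omega)
    omega
  -- size bound : a ^ totient n < Φ ^ 2
  have hsize : a ^ n.totient < Φ ^ 2 := by
    have h := cyclo_sq_gt_int n hn2 a (by omega)
    have h1 : (0 : ℤ) < (cyclotomic n ℤ).eval ((a : ℤ) - 1) := cyclotomic_pos hn2 _
    have h1' : (1 : ℤ) ≤ (cyclotomic n ℤ).eval ((a : ℤ) - 1) := by omega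
    have h4 := Polynomial.sub_one_pow_totient_lt_natAbs_cyclotomic_eval
      (n := n) (q := a + 1) (by omega) (by omega)
    rw [show a + 1 - 1 = a by omega] at h4
    have hpos5 : (0 : ℤ) < (cyclotomic n ℤ).eval ((a : ℤ) + 1) := cyclotomic_pos hn2 _
    have h5 : ((a : ℤ)) ^ n.totient < (cyclotomic n ℤ).eval ((a : ℤ) + 1) := by
      have h6 : ((a ^ n.totient : ℕ) : ℤ) < (((cyclotomic n ℤ).eval (((a + 1 : ℕ) : ℤ))).natAbs : ℤ) := by
        exact_mod_cast h4
      rw [show (((a + 1 : ℕ) : ℤ)) = (a : ℤ) + 1 by push_cast; ring] at h6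
      rw [Int.natAbs_of_nonneg hpos5.le] at h6
      push_cast at h6
      exact h6
    have h7 : ((a : ℤ)) ^ n.totient < Φℤ ^ 2 := by
      calc ((a : ℤ)) ^ n.totient < (cyclotomic n ℤ).eval ((a : ℤ) + 1) := h5
        _ ≤ (cyclotomic n ℤ).eval ((a : ℤ) - 1) * (cyclotomic n ℤ).eval ((a : ℤ) + 1) := by
            nlinarith [hpos5, h1']
        _ < Φℤ ^ 2 := h
    rw [← hΦcast] at h7
    exact_mod_cast h7
  -- claim A
  have claimA : ∀ p : ℕ, p.Prime → p ∣ Φ →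
      p ∣ n ∧ (n / p ^ n.factorization p) ∣ p - 1 := by
    intro p hp hpΦ
    haveI : Fact p.Prime := ⟨hp⟩
    have hpΦℤ : (p : ℤ) ∣ Φℤ := by
      rw [← hΦcast]
      exact_mod_cast hpΦ
    have hprim := cyclo_order (a := a) hn0 hp hpΦℤ
    set m := n / p ^ n.factorization p with hm
    have hm0 : 0 < m := Nat.ordCompl_pos p hn0.ne'
    obtain ⟨j, hj1, hjn, hpj⟩ := hex p hp (hpΦ.trans hΦdvd)
    have hαj : (a : ZMod p) ^ j = 1 := (dvd_pow_sub_one_iff ha0).mp hpj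
    have hmj : m ∣ j := (hprim.pow_eq_one_iff_dvd j).mp hαj
    have hmlt : m < n := lt_of_le_of_lt (Nat.le_of_dvd (by omega) hmj) hjn
    have hpn : p ∣ n := by
      by_contra hnd
      have h0 : n.factorization p = 0 := Nat.factorization_eq_zero_of_not_dvd hnd
      rw [hm, h0, pow_zero, Nat.div_one] at hmlt
      omega
    have hα0 : (a : ZMod p) ≠ 0 := by
      intro h
      have := hprim.pow_eq_one
      rw [h, zero_pow hm0.ne'] at this
      exact zero_ne_one this
    have hfer : m ∣ p - 1 :=
      (hprim.pow_eq_one_iff_dvd (p - 1)).mp (ZMod.pow_card_sub_one_eq_one hα0)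
    exact ⟨hpn, hfer⟩
  -- uniqueness of prime divisors of Φ
  have key : ∀ p q : ℕ, p.Prime → q.Prime → p ∣ Φ → q ∣ Φ → q ≠ p → q < p := by
    intro p q hp hq hpΦ hqΦ hne
    obtain ⟨hpn, hfer⟩ := claimA p hp hpΦ
    obtain ⟨hqn, _⟩ := claimA q hq hqΦ
    have h1 : q ∣ n / p ^ n.factorization p := by
      have hself := Nat.ordProj_mul_ordCompl_eq_self n p
      have hq2 : q ∣ p ^ n.factorization p * (n / p ^ n.factorization p) := by
        rw [hself]; exact hqn
      rcases (Nat.Prime.dvd_mul hq).mp hq2 with h | h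
      · exact absurd ((Nat.prime_dvd_prime_iff_eq hq hp).mp (hq.dvd_of_dvd_pow h)) hne
      · exact h
    have h2 : q ∣ p - 1 := h1.trans hfer
    have h3 : q ≤ p - 1 := Nat.le_of_dvd (by have := hp.two_le; omega) h2
    have := hp.two_le
    omega
  set p₀ := Φ.minFac with hp₀def
  have hp₀ : p₀.Prime := Nat.minFac_prime (by omega)
  have hp₀Φ : p₀ ∣ Φ := Nat.minFac_dvd Φ
  obtain ⟨hp₀n, hp₀fer⟩ := claimA p₀ hp₀ hp₀Φ
  set k := n.factorization p₀ with hkdef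
  set m := n / p₀ ^ k with hmdef
  have hself : p₀ ^ k * m = n := Nat.ordProj_mul_ordCompl_eq_self n p₀
  have hm0 : 0 < m := Nat.ordCompl_pos p₀ hn0.ne'
  have hk1 : 1 ≤ k := by
    rcases Nat.eq_zero_or_pos k with h | h
    · exfalso
      rw [h, pow_zero, one_mul] at hself
      have hmn : m < n := by
        obtain ⟨j, hj1, hjn, hpj⟩ := hex p₀ hp₀ (hp₀Φ.trans hΦdvd)
        have hprim := cyclo_order (a := a) hn0 hp₀ (show (p₀:ℤ) ∣ Φℤ by rw [← hΦcast]; exact_mod_cast hp₀Φ)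
        have hαj : (a : ZMod p₀) ^ j = 1 := by
          haveI : Fact p₀.Prime := ⟨hp₀⟩
          exact (dvd_pow_sub_one_iff ha0).mp hpj
        have hmj : m ∣ j := (hprim.pow_eq_one_iff_dvd j).mp hαj
        exact lt_of_le_of_lt (Nat.le_of_dvd (by omega) hmj) hjn
      omega
    · omega
  -- p₀ ∤ m and coprimality
  have hp₀m : ¬ p₀ ∣ m := Nat.not_dvd_ordCompl hp₀ hn0.ne'
  -- p₀ ∣ a ^ m - 1 in ℤ
  have hprim := cyclo_order (a := a) hn0 hp₀ (show (p₀:ℤ) ∣ Φℤ by rw [← hΦcast]; exact_mod_cast hp₀Φ)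
  haveI : Fact p₀.Prime := ⟨hp₀⟩
  have hpam : (p₀ : ℤ) ∣ (a : ℤ) ^ m - 1 := by
    have h1 : (a : ZMod p₀) ^ m = 1 := hprim.pow_eq_one
    have h2 : p₀ ∣ a ^ m - 1 := (dvd_pow_sub_one_iff ha0).mpr h1
    have h3 : (p₀ : ℤ) ∣ ((a ^ m - 1 : ℕ) : ℤ) := by exact_mod_cast h2
    rwa [Nat.cast_sub (Nat.one_le_pow _ _ ha0), Nat.cast_pow, Nat.cast_one] at h3
  -- t = n / p₀
  set t := n / p₀ with htdef
  have htn : t * p₀ = n := Nat.div_mul_cancel hp₀n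
  have ht0 : 0 < t := by
    rcases Nat.eq_zero_or_pos t with h | h
    · rw [h, zero_mul] at htn; omega
    · exact h
  have htlt : t < n := by
    have := hp₀.two_le
    nlinarith [htn]
  have htprop : t ∈ n.properDivisors := Nat.mem_properDivisors.mpr ⟨⟨p₀, htn.symm⟩, htlt⟩
  have hmt : m ∣ t := by
    have hcop : Nat.Coprime m p₀ := Nat.Coprime.symm ((hp₀.coprime_iff_not_dvd).mpr hp₀m)
    have h1 : m * p₀ ∣ n := hcop.mul_dvd_of_dvd_of_dvd (Nat.ordCompl_dvd n p₀) hp₀n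
    obtain ⟨c, hc⟩ := h1
    refine ⟨c, ?_⟩
    have : t * p₀ = m * c * p₀ := by rw [htn, hc]; ring
    exact Nat.eq_of_mul_eq_mul_right hp₀.pos this
  have hpat : (p₀ : ℤ) ∣ (a : ℤ) ^ t - 1 := by
    obtain ⟨c, hc⟩ := hmt
    have h9 := sub_dvd_pow_sub_pow ((a : ℤ) ^ m) 1 c
    rw [one_pow, ← pow_mul] at h9
    rw [hc]
    exact hpam.trans h9
  -- Φℤ divides the geometric sum
  have hdivS : Φℤ ∣ ∑ j ∈ range p₀, ((a : ℤ) ^ t) ^ j := by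
    have h1 := X_pow_sub_one_mul_cyclotomic_dvd_X_pow_sub_one_of_dvd ℤ htprop
    have h2 : ((a : ℤ) ^ t - 1) * Φℤ ∣ (a : ℤ) ^ n - 1 := by
      have h3 := eval_dvd (x := (a : ℤ)) h1
      simpa using h3
    have h3 : (a : ℤ) ^ n - 1 = ((a : ℤ) ^ t - 1) * ∑ j ∈ range p₀, ((a : ℤ) ^ t) ^ j := by
      rw [mul_comm, geom_sum_mul, ← pow_mul, htn]
    rw [h3] at h2
    have hane : (a : ℤ) ^ t - 1 ≠ 0 := by
      have h5 : (2 : ℤ) ≤ (a : ℤ) := by exact_mod_cast ha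
      have h6 : (1 : ℤ) < (a : ℤ) ^ t := one_lt_pow₀ (by linarith) ht0.ne'
      omega
    exact (mul_dvd_mul_iff_left hane).mp h2
  -- p₀ ^ 2 does not divide Φ
  have hsq : ¬ (p₀ ^ 2 ∣ Φ) := by
    intro hcon
    have hconℤ : ((p₀ : ℤ)) ^ 2 ∣ Φℤ := by
      rw [← hΦcast]
      exact_mod_cast hcon
    have hSdvd : ((p₀ : ℤ)) ^ 2 ∣ ∑ j ∈ range p₀, ((a : ℤ) ^ t) ^ j := hconℤ.trans hdivS
    rcases hp₀.eq_two_or_odd with h2 | hodd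
    · -- p₀ = 2 : n = 2 ^ k, t even, a odd
      have haodd : a % 2 = 1 := by
        rcases Nat.even_or_odd a with he | ho
        · exfalso
          have hd1 : 2 ∣ a ^ n - 1 := by
            rw [← h2]
            exact (hp₀Φ.trans hΦdvd)
          have hd2 : 2 ∣ a ^ n := dvd_pow he.two_dvd hn0.ne'
          omega
        · obtain ⟨w, hw⟩ := ho
          omega
      have hm1 : m = 1 := by
        have := hp₀fer
        rw [h2] at this
        simpa using this
      have hkn : 2 ^ k = n := by
        rw [← hself, hm1, h2, mul_one]
      have hk3 : 3 ≤ k := by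
        by_contra hlt
        push_neg at hlt
        interval_cases k <;> omega
      have hteq : t = 2 ^ (k - 1) := by
        have : n = 2 ^ (k - 1) * 2 := by
          rw [← hkn, ← pow_succ]
          congr 1
          omega
        rw [htdef, h2, this]
        simp
      have hteven : 2 ∣ t := by
        rw [hteq]
        exact dvd_pow_self 2 (by omega)
      obtain ⟨u, hu⟩ := hteven
      -- x = a^t = (a^u)^2, a^u odd
      have hyodd : Odd ((a : ℤ) ^ u) := by
        have : Odd (a : ℤ) := by
          rcases Int.even_or_odd (a : ℤ) with he | ho
          · exfalso
            obtain ⟨w, hw⟩ := he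
            omega
          · exact ho
        exact this.pow
      obtain ⟨v, hv⟩ := hyodd
      have hx4 : (4 : ℤ) ∣ (a : ℤ) ^ t - 1 := by
        have hxy : (a : ℤ) ^ t = ((a : ℤ) ^ u) ^ 2 := by
          rw [← pow_mul]
          congr 1
          omega
        rw [hxy, hv]
        refine ⟨v ^ 2 + v, by ring⟩
      have hSsum : ∑ j ∈ range p₀, ((a : ℤ) ^ t) ^ j = 1 + (a : ℤ) ^ t := by
        rw [h2]
        simp [Finset.sum_range_succ]
      rw [hSsum, h2] at hSdvd
      norm_num at hSdvd
      omega
    · -- odd case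
      exact geom_sum_not_sq_dvd_odd hp₀ hodd hpat hSdvd
  -- Φ = p₀
  have hΦeq : Φ = p₀ := by
    have huniq : ∀ {q : ℕ}, q.Prime → q ∣ Φ → q = p₀ := by
      intro q hq hqΦ
      by_contra hne
      have h1 := key p₀ q hp₀ hq hp₀Φ hqΦ hne
      have h2 := key q p₀ hq hp₀ hqΦ hp₀Φ (Ne.symm hne)
      omega
    have hfact := Nat.eq_prime_pow_of_unique_prime_dvd (by omega : Φ ≠ 0) huniq
    set e := Φ.primeFactorsList.length with hedef
    have he2 : e < 2 := by
      by_contra h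
      push_neg at h
      exact hsq (hfact ▸ pow_dvd_pow p₀ h)
    interval_cases e
    · rw [pow_zero] at hfact; omega
    · rw [pow_one] at hfact; exact hfact
  -- size contradiction
  set F := n.totient with hFdef
  have hF0 : 0 < F := Nat.totient_pos.mpr hn0
  have hFeven : Even F := Nat.totient_even hn2
  have hdF : (p₀ - 1) ∣ F := by
    have h1 : Nat.totient p₀ ∣ F := Nat.totient_dvd_of_dvd hp₀n
    rwa [Nat.totient_prime hp₀] at h1
  have hsize2 : 2 ^ F < p₀ ^ 2 := by
    calc 2 ^ F ≤ a ^ F := Nat.pow_le_pow_left (by omega) F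
      _ < Φ ^ 2 := hsize
      _ = p₀ ^ 2 := by rw [hΦeq]
  have hp₀F : p₀ - 1 ≤ F := Nat.le_of_dvd hF0 hdF
  have hF5 : F ≤ 5 := by
    by_contra h
    push_neg at h
    have h6 : 6 ≤ F := h
    obtain ⟨d, hd⟩ : ∃ d, F = d + 6 := ⟨F - 6, by omega⟩
    have hb := sq_bound_totient d
    have hp₀le : p₀ ≤ F + 1 := by omega
    have : p₀ ^ 2 ≤ (F + 1) ^ 2 := Nat.pow_le_pow_left hp₀le 2
    rw [hd] at this hsize2
    have : (d + 7) ^ 2 < (d + 7) ^ 2 := by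
      calc (d + 7) ^ 2 ≤ 2 ^ (d + 6) := hb
        _ < p₀ ^ 2 := hsize2
        _ ≤ (d + 6 + 1) ^ 2 := this
        _ = (d + 7) ^ 2 := by ring_nf
    omega
  -- structure of n
  have hcop : Nat.Coprime (p₀ ^ k) m := Nat.Coprime.pow_left k ((hp₀.coprime_iff_not_dvd).mpr hp₀m)
  have htot : F = p₀ ^ (k - 1) * (p₀ - 1) * m.totient := by
    rw [hFdef, ← hself, Nat.totient_mul hcop, Nat.totient_prime_pow hp₀ (by omega)]
  have hFcase : F = 2 ∨ F = 4 := by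
    rcases hFeven with ⟨w, hw⟩
    omega
  rcases hFcase with hF | hF
  · -- F = 2 : p₀ = 3, n ≤ 6
    have hp₀3 : p₀ = 3 := by
      rw [hF] at hsize2
      have h1 : p₀ - 1 ≤ 2 := by omega
      have h2 : 2 ≤ p₀ := hp₀.two_le
      have hne2 : p₀ ≠ 2 := by
        intro h
        rw [h] at hsize2
        norm_num at hsize2
      omega
    have hm2 : m ≤ 2 := Nat.le_of_dvd (by norm_num) (by rw [hp₀3] at hp₀fer; exact hp₀fer)
    rw [hF, hp₀3] at htot
    norm_num at htot
    have hφpos : 0 < m.totient := Nat.totient_pos.mpr hm0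
    have hC : 3 ^ (k - 1) * m.totient * 2 = 2 := by
      conv_rhs => rw [htot]
      ring
    have hAB : 3 ^ (k - 1) * m.totient = 1 := by omega
    have h31 : 1 ≤ 3 ^ (k - 1) := Nat.one_le_pow _ _ (by norm_num)
    have hA : 3 ^ (k - 1) = 1 := by
      have hle := Nat.le_mul_of_pos_right (3 ^ (k - 1)) hφpos
      omega
    have hk1' : k = 1 := by
      by_contra hne
      have h2k : 1 ≤ k - 1 := by omega
      have h3k : 3 ^ 1 ≤ 3 ^ (k - 1) := Nat.pow_le_pow_right (by norm_num) h2k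
      norm_num at h3k
      omega
    have hle6 : n ≤ 6 := by
      rw [← hself, hp₀3, hk1', pow_one]
      omega
    omega
  · -- F = 4 : p₀ = 5, n = 10, m = 2, a = 2
    have hp₀5 : p₀ = 5 := by
      rw [hF] at hsize2
      rw [hF] at hdF
      have h1 : p₀ - 1 ≤ 4 := by omega
      have h2 : 2 ≤ p₀ := hp₀.two_le
      have hne2 : p₀ ≠ 2 := by intro h; rw [h] at hsize2; norm_num at hsize2
      have hne3 : p₀ ≠ 3 := by intro h; rw [h] at hsize2; norm_num at hsize2
      have hne4 : p₀ ≠ 4 := by intro h; rw [h] at hp₀; norm_num at hp₀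
      have h3 : p₀ - 1 ∣ 4 := hdF
      have h4 : p₀ - 1 ≠ 3 := by
        intro h
        rw [h] at h3
        norm_num at h3
      omega
    have hm4 : m ∣ 4 := by rw [hp₀5] at hp₀fer; exact hp₀fer
    rw [hF, hp₀5] at htot
    norm_num at htot
    have hφpos : 0 < m.totient := Nat.totient_pos.mpr hm0
    have hC : 5 ^ (k - 1) * m.totient * 4 = 4 := by
      conv_rhs => rw [htot]
      ring
    have hAB : 5 ^ (k - 1) * m.totient = 1 := by omega
    have h51 : 1 ≤ 5 ^ (k - 1) := Nat.one_le_pow _ _ (by norm_num)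
    have hA : 5 ^ (k - 1) = 1 := by
      have hle := Nat.le_mul_of_pos_right (5 ^ (k - 1)) hφpos
      omega
    have hB : m.totient = 1 := by
      have hle := Nat.le_mul_of_pos_left m.totient (by omega : 0 < 5 ^ (k - 1))
      omega
    have hk1' : k = 1 := by
      by_contra hne
      have h2k : 1 ≤ k - 1 := by omega
      have h5k : 5 ^ 1 ≤ 5 ^ (k - 1) := Nat.pow_le_pow_right (by norm_num) h2k
      norm_num at h5k
      omega
    have hmle4 : m ≤ 4 := Nat.le_of_dvd (by norm_num) hm4
    have hm0' : 1 ≤ m := hm0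
    have hm2 : m = 2 := by
      have hcases : m = 1 ∨ m = 2 ∨ m = 3 ∨ m = 4 := by omega
      rcases hcases with h | h | h | h
      · exfalso
        rw [← hself, hp₀5, hk1', h] at hn
        norm_num at hn
      · exact h
      · exfalso
        rw [h] at hm4
        norm_num at hm4
      · exfalso
        rw [h] at hB
        exact absurd hB (by decide)
    have hn10 : n = 10 := by
      rw [← hself, hp₀5, hk1', hm2]
      norm_num
    have ha4 : a ^ 4 < 25 := by
      have h := hsize
      rw [hΦeq, hp₀5, hF] at h
      norm_num at h
      exact h
    have ha2 : a = 2 := by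
      by_contra hne
      have h3 : 3 ≤ a := by omega
      have h4 : 3 ^ 4 ≤ a ^ 4 := Nat.pow_le_pow_left h3 4
      norm_num at h4
      omega
    rw [ha2, hm2, hp₀5] at hpam
    norm_num at hpam
end

section
/- Let p and q be odd primes, and let m ≥ 2, λ ≥ 1, β ≥ 0 be integers such that (p^(λ+1) - 1)/(p - 1) = m·q^β. Then λ + 1 ≤ m². -/
open Finset

lemma aux_cube (n : ℕ) : n ^ 3 ≤ 3 ^ n := by
  induction n with
  | zero => norm_num
  | succ k ih =>
    rcases Nat.lt_or_ge k 3 with h | h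
    · interval_cases k <;> norm_num
    · have : (k + 1) ^ 3 ≤ 3 * k ^ 3 := by nlinarith [sq_nonneg k, sq_nonneg (k-3)]
      calc (k+1)^3 ≤ 3 * k^3 := this
        _ ≤ 3 * 3 ^ k := by omega
        _ = 3 ^ (k+1) := by ring

lemma aux_geom_factor (p t k : ℕ) :
    ∑ i ∈ range (t * k), p ^ i
      = (∑ i ∈ range t, p ^ i) * (∑ j ∈ range k, (p ^ t) ^ j) := by
  induction k with
  | zero => simp
  | succ k ih =>
    rw [Nat.mul_succ, Finset.sum_range_add, ih, Finset.sum_range_succ, Nat.mul_add]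
    congr 1
    rw [Finset.sum_mul]
    apply Finset.sum_congr rfl
    intro i _
    rw [← pow_mul, ← pow_add, mul_comm t k, Nat.add_comm (k*t) i]

lemma aux_dvd_geom_iff (p ℓ : ℕ) (hl : ℓ.Prime) (a : ℕ) :
    ℓ ∣ ∑ i ∈ Finset.range a, p ^ i ↔
      (if (p : ZMod ℓ) = 1 then ℓ else orderOf (p : ZMod ℓ)) ∣ a := by
  haveI : Fact ℓ.Prime := ⟨hl⟩
  have hcast : ((∑ i ∈ range a, p ^ i : ℕ) : ZMod ℓ) = ∑ i ∈ range a, (p : ZMod ℓ) ^ i := by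
    push_cast; rfl
  rw [← ZMod.natCast_eq_zero_iff, hcast]
  by_cases hP : (p : ZMod ℓ) = 1
  · rw [if_pos hP]
    simp only [hP, one_pow, Finset.sum_const, Finset.card_range, smul_eq_mul, mul_one, nsmul_eq_mul]
    exact (ZMod.natCast_eq_zero_iff a ℓ)
  · rw [if_neg hP]
    rw [orderOf_dvd_iff_pow_eq_one]
    constructor
    · intro h
      have := geom_sum_mul (p : ZMod ℓ) a
      rw [h, zero_mul] at this
      have := this.symm
      rw [sub_eq_zero] at this
      exact this
    · intro h
      have hg := geom_sum_mul (p : ZMod ℓ) a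
      rw [h, sub_self] at hg
      rcases mul_eq_zero.mp hg with h0 | h0
      · exact h0
      · exact absurd (by rwa [sub_eq_zero] at h0) hP

lemma aux_geom_mul (p n : ℕ) (hp : 1 ≤ p) :
    (∑ i ∈ Finset.range n, p ^ i) * (p - 1) = p ^ n - 1 := by
  have h1 : 1 ≤ p ^ n := Nat.one_le_pow _ _ hp
  zify [hp, h1]
  exact geom_sum_mul _ _

lemma aux_card_le_geom (p a : ℕ) (hp : 1 ≤ p) : a ≤ ∑ i ∈ Finset.range a, p ^ i := by
  calc a = ∑ _i ∈ range a, 1 := by simp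
    _ ≤ ∑ i ∈ range a, p ^ i :=
      Finset.sum_le_sum fun i _ => Nat.one_le_pow _ _ hp

lemma aux_pow_le_geom (p a : ℕ) (ha : 1 ≤ a) : p ^ (a - 1) ≤ ∑ i ∈ Finset.range a, p ^ i :=
  Finset.single_le_sum (f := fun i => p ^ i) (fun _ _ => Nat.zero_le _)
    (Finset.mem_range.mpr (by omega))

lemma aux_val (p q t k : ℕ) (hq : q.Prime) (hqodd : Odd q) (hp3 : 3 ≤ p)
    (hqp : ¬ q ∣ p) (ht : 1 ≤ t) (hk : 1 ≤ k)
    (hqt : q ∣ ∑ i ∈ Finset.range t, p ^ i) :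
    padicValNat q (∑ i ∈ Finset.range (t * k), p ^ i)
      = padicValNat q (∑ i ∈ Finset.range t, p ^ i) + padicValNat q k := by
  haveI : Fact q.Prime := ⟨hq⟩
  have hp1 : 1 ≤ p := by omega
  have hSt := aux_geom_mul p t hp1
  have hSn := aux_geom_mul p (t * k) hp1
  have hxy : q ∣ p ^ t - 1 := hSt ▸ Dvd.dvd.mul_right hqt (p - 1)
  have hx : ¬ q ∣ p ^ t := fun h => hqp (hq.dvd_of_dvd_pow h)
  have hyx : (1 : ℕ) < p ^ t := Nat.one_lt_pow (by omega) (by omega)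
  have main := padicValNat.pow_sub_pow (p := q) hqodd (x := p ^ t) (y := 1)
      hyx (by simpa using hxy) hx (n := k) (by omega)
  rw [one_pow, ← pow_mul] at main
  have hStpos : (∑ i ∈ Finset.range t, p ^ i) ≠ 0 := by
    have := aux_card_le_geom p t hp1; omega
  have hSnpos : (∑ i ∈ Finset.range (t * k), p ^ i) ≠ 0 := by
    have := aux_card_le_geom p (t * k) hp1
    have : 1 ≤ t * k := Nat.mul_le_mul ht hk
    omega
  have hpm1 : p - 1 ≠ 0 := by omega
  have e1 : padicValNat q (p ^ (t * k) - 1)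
      = padicValNat q (∑ i ∈ Finset.range (t * k), p ^ i) + padicValNat q (p - 1) := by
    rw [← hSn, padicValNat.mul hSnpos hpm1]
  have e2 : padicValNat q (p ^ t - 1)
      = padicValNat q (∑ i ∈ Finset.range t, p ^ i) + padicValNat q (p - 1) := by
    rw [← hSt, padicValNat.mul hStpos hpm1]
  omega

theorem lambda_bound_of_sigma_eq_mul_prime_pow
    (p q m l β : ℕ) (hp : p.Prime) (hq : q.Prime)
    (hpodd : Odd p) (hqodd : Odd q) (hm : 2 ≤ m) (hl : 1 ≤ l)
    (heq : ∑ i ∈ Finset.range (l + 1), p ^ i = m * q ^ β) :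
    l + 1 ≤ m ^ 2 := by
  haveI : Fact q.Prime := ⟨hq⟩
  set n := l + 1 with hn
  set S := ∑ i ∈ Finset.range n, p ^ i with hSdef
  have hp2 : p ≠ 2 := by rintro rfl; rw [Nat.odd_iff] at hpodd; omega
  have hq2 : q ≠ 2 := by rintro rfl; rw [Nat.odd_iff] at hqodd; omega
  have hp3 : 3 ≤ p := by have := hp.two_le; omega
  have hq3 : 3 ≤ q := by have := hq.two_le; omega
  have hn2 : 2 ≤ n := by omega
  have hnS : n ≤ S := aux_card_le_geom p n (by omega)
  have hS0 : S ≠ 0 := by omega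
  have hqβS : q ^ β ∣ S := ⟨m, by rw [heq]; ring⟩
  have hmm : m ≤ m ^ 2 := by nlinarith
  by_cases hqS : q ∣ S
  case neg =>
    have hβ0 : β = 0 := by
      by_contra hβ
      exact hqS ((dvd_pow_self q hβ).trans hqβS)
    rw [hβ0, pow_zero, mul_one] at heq
    omega
  case pos =>
  -- q does not divide p (ditto for any prime dividing S)
  have hdvdp : ∀ ℓ : ℕ, ℓ.Prime → ℓ ∣ S → ¬ ℓ ∣ p := by
    intro ℓ hℓ hℓS hd
    have h' : S = (∑ i ∈ Finset.range l, p ^ (i + 1)) + p ^ 0 :=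
      Finset.sum_range_succ' (fun i => p ^ i) l
    have hA : ℓ ∣ ∑ i ∈ Finset.range l, p ^ (i + 1) :=
      Finset.dvd_sum fun i _ => dvd_pow hd (Nat.succ_ne_zero i)
    have hp0 : p ^ 0 = 1 := pow_zero p
    have h1 : ℓ ∣ 1 := by
      have hsub := Nat.dvd_sub hℓS hA
      rwa [show S - (∑ i ∈ Finset.range l, p ^ (i + 1)) = 1 by omega] at hsub
    have := Nat.le_of_dvd one_pos h1
    have := hℓ.two_le
    omega
  have hqp : ¬ q ∣ p := hdvdp q hq hqS
  -- the threshold t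
  set t := if (p : ZMod q) = 1 then q else orderOf (p : ZMod q) with htdef
  have hC : ∀ a : ℕ, q ∣ ∑ i ∈ Finset.range a, p ^ i ↔ t ∣ a :=
    fun a => aux_dvd_geom_iff p q hq a
  have htn : t ∣ n := (hC n).mp hqS
  have ht2 : 2 ≤ t := by
    rcases Nat.lt_or_ge t 2 with h | h
    · interval_cases t
      · exact absurd (Nat.eq_zero_of_zero_dvd htn) (by omega)
      · have h1 : q ∣ ∑ i ∈ Finset.range 1, p ^ i := (hC 1).mpr dvd_rfl
        simp at h1
        omega
    · exact h
  -- the q-free part r of S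
  set v := S.factorization q with hvdef
  set r := ordCompl[q] S with hrdef
  have hv : q ^ v * r = S := Nat.ordProj_mul_ordCompl_eq_self S q
  have hβv : β ≤ v := (Nat.Prime.pow_dvd_iff_le_factorization hq hS0).mp hqβS
  have hqr : ¬ q ∣ r := Nat.not_dvd_ordCompl hq hS0
  have hr0 : r ≠ 0 := by rintro h0; rw [h0, mul_zero] at hv; omega
  have hmr : m = r * q ^ (v - β) := by
    have hq0 : 0 < q ^ β := pow_pos (by omega) β
    apply Nat.eq_of_mul_eq_mul_right hq0
    rw [mul_assoc, ← pow_add, Nat.sub_add_cancel hβv, ← heq, mul_comm r _, hv]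
  have hrm : r ≤ m := by
    rw [hmr]
    exact Nat.le_mul_of_pos_right r (pow_pos (by omega) _)
  by_cases htn' : t = n
  · -- case B : t = n
    by_cases hnp : Nat.Prime n
    · -- n prime
      have hnq : n ≤ q := by
        by_cases hP1 : (p : ZMod q) = 1
        · rw [htdef, if_pos hP1] at htn'; omega
        · rw [htdef, if_neg hP1] at htn'
          have hP0 : (p : ZMod q) ≠ 0 := by
            rw [Ne, ZMod.natCast_eq_zero_iff]; exact hqp
          have hford : orderOf (p : ZMod q) ∣ q - 1 := by
            rw [orderOf_dvd_iff_pow_eq_one]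
            exact ZMod.pow_card_sub_one_eq_one hP0
          rw [htn'] at hford
          have := Nat.le_of_dvd (by omega) hford
          omega
      rcases eq_or_ne r 1 with hr1 | hr1
      · -- m is a power of q, m ≥ q ≥ n
        rw [hr1, one_mul] at hmr
        have hvb : v - β ≠ 0 := by rintro h0; rw [h0, pow_zero] at hmr; omega
        have : q ≤ m := hmr ▸ Nat.le_self_pow hvb q
        omega
      · -- r has a prime factor ℓ ≥ n
        set ℓ := r.minFac with hℓdef
        haveI : Fact ℓ.Prime := ⟨Nat.minFac_prime hr1⟩
        have hℓp : ℓ.Prime := Nat.minFac_prime hr1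
        have hℓr : ℓ ∣ r := Nat.minFac_dvd r
        have hℓS : ℓ ∣ S := hℓr.trans (hv ▸ Dvd.intro_left (q ^ v) rfl)
        have hℓq : ℓ ≠ q := fun h => hqr (h ▸ hℓr)
        have htl : (if (p : ZMod ℓ) = 1 then ℓ else orderOf (p : ZMod ℓ)) ∣ n :=
          (aux_dvd_geom_iff p ℓ hℓp n).mp hℓS
        have hnℓ : n ≤ ℓ := by
          by_cases hPl : (p : ZMod ℓ) = 1
          · rw [if_pos hPl] at htl
            rcases (Nat.Prime.eq_one_or_self_of_dvd hnp ℓ htl) with h1 | h2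
            · exact absurd h1 hℓp.one_lt.ne'
            · omega
          · rw [if_neg hPl] at htl
            have ho1 : orderOf (p : ZMod ℓ) ≠ 1 := by
              rw [Ne, orderOf_eq_one_iff]; exact hPl
            have hoeq : orderOf (p : ZMod ℓ) = n :=
              ((Nat.Prime.eq_one_or_self_of_dvd hnp _ htl).resolve_left ho1)
            have hPl0 : (p : ZMod ℓ) ≠ 0 := by
              rw [Ne, ZMod.natCast_eq_zero_iff]
              exact hdvdp ℓ hℓp hℓS
            have hford : orderOf (p : ZMod ℓ) ∣ ℓ - 1 := by
              rw [orderOf_dvd_iff_pow_eq_one]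
              exact ZMod.pow_card_sub_one_eq_one hPl0
            rw [hoeq] at hford
            have h2ℓ := hℓp.two_le
            have := Nat.le_of_dvd (by omega) hford
            omega
        have hlr : ℓ ≤ r := Nat.minFac_le (Nat.pos_of_ne_zero hr0)
        exact le_trans hnℓ (le_trans hlr (le_trans hrm hmm))
    · -- n composite
      set f := n.minFac with hfdef
      set d := n / f with hddef
      have hf : f.Prime := Nat.minFac_prime (by omega)
      have hfd : f ∣ n := Nat.minFac_dvd n
      have hdn : d ∣ n := Nat.div_dvd_of_dvd hfd
      have hd1 : 1 ≤ d := Nat.div_pos (Nat.minFac_le (show 0 < n by omega)) hf.pos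
      have hdlt : d < n := Nat.div_lt_self (by omega) hf.one_lt
      have hqd : ¬ q ∣ ∑ i ∈ Finset.range d, p ^ i := by
        intro h
        have := (hC d).mp h
        rw [htn'] at this
        exact absurd (Nat.le_of_dvd (by omega) this) (by omega)
      have hndf : d * f = n := Nat.div_mul_cancel hfd
      have hsd : (∑ i ∈ Finset.range d, p ^ i) ∣ S := by
        rw [hSdef, ← hndf, aux_geom_factor p d f]
        exact Dvd.intro _ rfl
      have hsdm : (∑ i ∈ Finset.range d, p ^ i) ∣ m := by
        have hcop : Nat.Coprime (∑ i ∈ Finset.range d, p ^ i) (q ^ β) :=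
          (Nat.Coprime.pow_right β (((hq.coprime_iff_not_dvd).mpr hqd).symm))
        exact hcop.dvd_of_dvd_mul_right (heq ▸ hsd)
      have hdm : d ≤ m :=
        le_trans (aux_card_le_geom p d (by omega)) (Nat.le_of_dvd (by omega) hsdm)
      have hfsq : f ^ 2 ≤ n := Nat.minFac_sq_le_self (by omega) hnp
      have hfled : f ≤ d := by
        have : f * f ≤ d * f := by nlinarith [hndf]
        exact Nat.le_of_mul_le_mul_right this hf.pos
      calc n = d * f := hndf.symm
        _ ≤ d * d := Nat.mul_le_mul_left d hfled
        _ ≤ m * m := Nat.mul_le_mul hdm hdm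
        _ = m ^ 2 := (sq m).symm
  · -- case A : t < n
    have htlt : t < n := lt_of_le_of_ne (Nat.le_of_dvd (by omega) htn) htn'
    set k := n / t with hkdef
    have hk : n = t * k := (Nat.mul_div_cancel' htn).symm
    have hk2 : 2 ≤ k := by
      rcases Nat.lt_or_ge k 2 with h | h
      · interval_cases k <;> omega
      · exact h
    have hqSt : q ∣ ∑ i ∈ Finset.range t, p ^ i := (hC t).mpr dvd_rfl
    have hval := aux_val p q t k hq hqodd hp3 hqp (by omega) (by omega) hqSt
    have hSt0 : (∑ i ∈ Finset.range t, p ^ i) ≠ 0 := by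
      have := aux_card_le_geom p t (by omega); omega
    -- S = s_t * T
    set T := ∑ j ∈ Finset.range k, (p ^ t) ^ j with hTdef
    have hfac : S = (∑ i ∈ Finset.range t, p ^ i) * T := by
      rw [hSdef, hk, aux_geom_factor p t k]
    have hvsplit : v = padicValNat q (∑ i ∈ Finset.range t, p ^ i) + padicValNat q k := by
      rw [hvdef, Nat.factorization_def S hq, hSdef, hk, hval]
    have hqvle : q ^ v ≤ (∑ i ∈ Finset.range t, p ^ i) * k := by
      rw [hvsplit, pow_add]
      exact Nat.mul_le_mul
        (Nat.le_of_dvd (by omega) (pow_padicValNat_dvd))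
        (Nat.le_of_dvd (by omega) (pow_padicValNat_dvd))
    have hTrk : T ≤ k * r := by
      have h1 : (∑ i ∈ Finset.range t, p ^ i) * T = q ^ v * r := by rw [hv, hfac]
      have h2 : q ^ v * r ≤ (∑ i ∈ Finset.range t, p ^ i) * k * r :=
        Nat.mul_le_mul_right r hqvle
      have h3 : (∑ i ∈ Finset.range t, p ^ i) * T
          ≤ (∑ i ∈ Finset.range t, p ^ i) * (k * r) := by
        rw [h1]; calc q ^ v * r ≤ (∑ i ∈ Finset.range t, p ^ i) * k * r := h2
          _ = (∑ i ∈ Finset.range t, p ^ i) * (k * r) := by ring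
      exact Nat.le_of_mul_le_mul_left h3 (by omega)
    have hTlb : 3 ^ (t * (k - 1)) ≤ T := by
      calc 3 ^ (t * (k - 1)) = (3 ^ t) ^ (k - 1) := by rw [pow_mul]
        _ ≤ (p ^ t) ^ (k - 1) :=
            Nat.pow_le_pow_left (Nat.pow_le_pow_left (by omega) t) _
        _ ≤ T := aux_pow_le_geom (p ^ t) k (by omega)
    -- final arithmetic
    have hstep : (t * k) * k ^ 2 ≤ r ^ 2 * k ^ 2 := by
      have e1 : 3 ^ (t * (k - 1)) ≤ k * r := le_trans hTlb hTrk
      have e2 : 3 ^ (t * k) ≤ (3 ^ (t * (k - 1))) ^ 2 := by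
        rw [← pow_mul]
        apply Nat.pow_le_pow_right (by omega)
        calc t * k ≤ t * ((k - 1) * 2) := Nat.mul_le_mul_left t (by omega)
          _ = t * (k - 1) * 2 := by ring
      have e3 : (t * k) ^ 3 ≤ 3 ^ (t * k) := aux_cube (t * k)
      have e4 : (t * k) * k ^ 2 ≤ (t * k) ^ 3 := by
        calc (t * k) * k ^ 2 ≤ (t * k) * (t * k) ^ 2 :=
              Nat.mul_le_mul_left (t * k)
                (Nat.pow_le_pow_left (Nat.le_mul_of_pos_left k (by omega)) 2)
          _ = (t * k) ^ 3 := by ring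
      calc (t * k) * k ^ 2 ≤ (t * k) ^ 3 := e4
        _ ≤ 3 ^ (t * k) := e3
        _ ≤ (3 ^ (t * (k - 1))) ^ 2 := e2
        _ ≤ (k * r) ^ 2 := Nat.pow_le_pow_left e1 2
        _ = r ^ 2 * k ^ 2 := by ring
    have hnr : n ≤ r ^ 2 := by
      rw [hk]
      have hkk : 0 < k ^ 2 := by positivity
      exact Nat.le_of_mul_le_mul_right hstep hkk
    calc n ≤ r ^ 2 := hnr
      _ ≤ m ^ 2 := Nat.pow_le_pow_left hrm 2
end

section
/- Let p, q be odd primes and λ, β, α positive integers such that (p^(λ+1) - 1)/(p - 1) = q^β and p^λ divides (q^(α+1) - 1)/(q - 1). Then p^(λ-1) divides α + 1. -/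
theorem exponent_divisibility
    (p q l β α : ℕ) (hp : p.Prime) (hq : q.Prime)
    (hpodd : Odd p) (hqodd : Odd q) (hl : 0 < l) (hβ : 0 < β) (hα : 0 < α)
    (heq : ∑ i ∈ Finset.range (l + 1), p ^ i = q ^ β)
    (hdvd : p ^ l ∣ ∑ i ∈ Finset.range (α + 1), q ^ i) :
    p ^ (l - 1) ∣ α + 1 := by
  haveI : Fact p.Prime := ⟨hp⟩
  set m := α + 1 with hm
  have hq1 : 1 < q := hq.one_lt
  have hp1 : 1 < p := hp.one_lt
  -- split the geometric sum
  have hsplit : ∀ n : ℕ, ∑ i ∈ Finset.range (n + 1), p ^ i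
      = 1 + p * ∑ i ∈ Finset.range n, p ^ i := by
    intro n
    rw [Finset.sum_range_succ']
    simp [pow_succ, Finset.mul_sum, mul_comm, add_comm]
  set S₀ := ∑ i ∈ Finset.range l, p ^ i with hS₀
  have hqβ : q ^ β = 1 + p * S₀ := by rw [← heq, hsplit]
  have hqβ1 : q ^ β - 1 = p * S₀ := by omega
  have hpS₀ : ¬ p ∣ S₀ := by
    obtain ⟨l', rfl⟩ : ∃ l', l = l' + 1 := ⟨l - 1, by omega⟩
    rw [hS₀, hsplit l']
    intro h
    rw [add_comm] at h
    have h1 : p ∣ 1 := (Nat.dvd_add_right (Dvd.intro _ rfl)).mp h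
    exact hp.one_lt.ne' (Nat.dvd_one.mp h1)
  have hdvdβ : p ∣ q ^ β - 1 := hqβ1 ▸ Dvd.intro _ rfl
  have hpq : ¬ p ∣ q := by
    intro h
    have h2 : p ∣ q ^ β := h.trans (dvd_pow_self q hβ.ne')
    have h3 : p ∣ q ^ β - (q ^ β - 1) := Nat.dvd_sub h2 hdvdβ
    have h4 : q ^ β - (q ^ β - 1) = 1 := by
      have : 1 ≤ q ^ β := Nat.one_le_pow _ _ hq.pos
      omega
    rw [h4] at h3
    exact hp.one_lt.ne' (Nat.dvd_one.mp h3)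
  have hpqn : ∀ n : ℕ, ¬ p ∣ q ^ n := fun n h => hpq (hp.dvd_of_dvd_pow h)
  -- bridge to ZMod p
  have bridge : ∀ n : ℕ, (p ∣ q ^ n - 1 ↔ (q : ZMod p) ^ n = 1) := by
    intro n
    have h1 : (1:ℕ) ≤ q ^ n := Nat.one_le_pow _ _ hq.pos
    rw [← Nat.modEq_iff_dvd' h1, ← ZMod.natCast_eq_natCast_iff]
    push_cast
    exact eq_comm
  -- geometric sum identity over ℕ
  have key : ∀ n : ℕ, (∑ i ∈ Finset.range n, q ^ i) * (q - 1) = q ^ n - 1 := by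
    intro n
    have h1 : (1:ℕ) ≤ q ^ n := Nat.one_le_pow _ _ hq.pos
    have h2 := geom_sum_mul (q : ℤ) n
    zify [hq1.le, h1]
    push_cast at h2 ⊢
    exact h2
  have hSm : (∑ i ∈ Finset.range m, q ^ i) ∣ q ^ m - 1 := Dvd.intro _ (key m)
  have hplm : p ^ l ∣ q ^ m - 1 := hdvd.trans hSm
  have hdvdm : p ∣ q ^ m - 1 := (dvd_pow_self p hl.ne').trans hplm
  set g := Nat.gcd β m with hg
  have hgβ : g ∣ β := Nat.gcd_dvd_left _ _
  have hgm : g ∣ m := Nat.gcd_dvd_right _ _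
  have hgpos : 0 < g := Nat.gcd_pos_of_pos_left _ hβ
  have hdvdg : p ∣ q ^ g - 1 := by
    rw [bridge]
    exact pow_gcd_eq_one.mpr ⟨(bridge β).mp hdvdβ, (bridge m).mp hdvdm⟩
  have hqg1 : 1 < q ^ g := Nat.one_lt_pow hgpos.ne' hq1
  -- lifting the exponent
  have lte : ∀ n : ℕ, n ≠ 0 → padicValNat p (q ^ (g * n) - 1)
      = padicValNat p (q ^ g - 1) + padicValNat p n := by
    intro n hn
    have h := padicValNat.pow_sub_pow (p := p) hpodd (x := q ^ g) (y := 1)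
      hqg1 (by simpa using hdvdg) (hpqn g) hn
    simpa [← pow_mul] using h
  -- v_p(q^β - 1) = 1
  have hposβ : 0 < q ^ β - 1 := by
    have := Nat.one_lt_pow hβ.ne' hq1; omega
  have hvβ : padicValNat p (q ^ β - 1) = 1 := by
    have hge : 1 ≤ padicValNat p (q ^ β - 1) := one_le_padicValNat_of_dvd hposβ.ne' hdvdβ
    have hnd : ¬ p ^ 2 ∣ q ^ β - 1 := by
      rw [hqβ1, pow_two]
      intro h
      exact hpS₀ ((mul_dvd_mul_iff_left (show (p:ℕ) ≠ 0 from hp.pos.ne')).mp h)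
    have hle : padicValNat p (q ^ β - 1) ≤ 1 := by
      by_contra hcon
      exact hnd ((padicValNat_dvd_iff_le hposβ.ne').mpr (by omega))
    omega
  have hβeq : g * (β / g) = β := Nat.mul_div_cancel' hgβ
  have hbne : β / g ≠ 0 := by
    have := Nat.div_pos (Nat.le_of_dvd hβ hgβ) hgpos; omega
  have hposg : 0 < q ^ g - 1 := by omega
  have hvg : padicValNat p (q ^ g - 1) = 1 := by
    have h := lte (β / g) hbne
    rw [hβeq, hvβ] at h
    have hge : 1 ≤ padicValNat p (q ^ g - 1) := one_le_padicValNat_of_dvd hposg.ne' hdvdg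
    omega
  have hmne : m / g ≠ 0 := by
    have := Nat.div_pos (Nat.le_of_dvd (by omega) hgm) hgpos; omega
  have hmeq : g * (m / g) = m := Nat.mul_div_cancel' hgm
  have hvm : padicValNat p (q ^ m - 1) = 1 + padicValNat p (m / g) := by
    have h := lte (m / g) hmne
    rwa [hmeq, hvg] at h
  have hposm : 0 < q ^ m - 1 := by
    have := Nat.one_lt_pow (show m ≠ 0 by omega) hq1; omega
  have hlle : l ≤ padicValNat p (q ^ m - 1) :=
    (padicValNat_dvd_iff_le hposm.ne').mp hplm
  have hkdvd : m / g ∣ m := ⟨g, (Nat.div_mul_cancel hgm).symm⟩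
  have hkm : padicValNat p (m / g) ≤ padicValNat p m := by
    apply (padicValNat_dvd_iff_le (show m ≠ 0 by omega)).mp
    exact pow_padicValNat_dvd.trans hkdvd
  rw [hvm] at hlle
  exact (padicValNat_dvd_iff_le (show m ≠ 0 by omega)).mpr (by omega)
end

section
/- There is no odd prime p and integer β ≥ 0 such that p² + p + 1 = 5^β. -/
theorem no_sol_quad_pow5 :
    ¬ ∃ (p β : ℕ), p.Prime ∧ Odd p ∧ p ^ 2 + p + 1 = 5 ^ β := by
  rintro ⟨p, β, hp, hodd, h⟩
  have hp2 := hp.two_le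
  cases β with
  | zero => simp at h; nlinarith
  | succ n =>
    have h5 : (p ^ 2 + p + 1) % 5 = 0 := by
      rw [h, pow_succ, Nat.mul_mod_left]
    have hq : p ^ 2 % 5 = (p % 5) ^ 2 % 5 := by rw [Nat.pow_mod]
    have hlt : p % 5 < 5 := Nat.mod_lt _ (by norm_num)
    interval_cases h : p % 5 <;> simp_all <;> omega
end

section
/- There is no odd prime p and integer β ≥ 0 such that p⁴ + p³ + p² + p + 1 = 3^β. -/
theorem no_sol_quart_pow3 :
    ¬ ∃ (p β : ℕ), p.Prime ∧ Odd p ∧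
      p ^ 4 + p ^ 3 + p ^ 2 + p + 1 = 3 ^ β := by
  rintro ⟨p, β, hp, hodd, h⟩
  have hp2 := hp.two_le
  have hβ : 2 ≤ β := by
    by_contra hb
    push_neg at hb
    interval_cases β <;> nlinarith
  have h9 : 3 ^ β % 9 = 0 := by
    obtain ⟨k, rfl⟩ := Nat.exists_eq_add_of_le hβ
    rw [pow_add]
    simp [Nat.mul_mod]
  rw [← h] at h9
  have hm : p % 9 < 9 := Nat.mod_lt _ (by norm_num)
  have e : (p ^ 4 + p ^ 3 + p ^ 2 + p + 1) % 9 =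
      ((p % 9) ^ 4 + (p % 9) ^ 3 + (p % 9) ^ 2 + p % 9 + 1) % 9 := by
    conv_lhs => rw [Nat.add_mod, Nat.add_mod (p ^ 4 + p ^ 3 + p ^ 2),
      Nat.add_mod (p ^ 4 + p ^ 3), Nat.add_mod (p ^ 4), Nat.pow_mod,
      Nat.pow_mod p 3, Nat.pow_mod p 2]
    conv_rhs => rw [Nat.add_mod, Nat.add_mod ((p % 9) ^ 4 + (p % 9) ^ 3 + (p % 9) ^ 2),
      Nat.add_mod ((p % 9) ^ 4 + (p % 9) ^ 3), Nat.add_mod ((p % 9) ^ 4)]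
    simp [Nat.mod_mod_of_dvd, Nat.pow_mod]
  rw [e] at h9
  interval_cases hr : p % 9 <;> simp_all
end

section
/- There is no odd prime p and integer β ≥ 0 such that p⁴ + p³ + p² + p + 1 = 5^β. -/
theorem no_sol_quart_pow5 :
    ¬ ∃ (p β : ℕ), p.Prime ∧ Odd p ∧
      p ^ 4 + p ^ 3 + p ^ 2 + p + 1 = 5 ^ β := by
  rintro ⟨p, β, hp, hodd, heq⟩
  have h2 := hp.two_le
  have hne2 : p ≠ 2 := by
    rintro rfl
    simp [Nat.odd_iff] at hodd
  have hp3 : 3 ≤ p := by omega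
  have hbig : 121 ≤ p ^ 4 + p ^ 3 + p ^ 2 + p + 1 := by
    have h4 : 3 ^ 4 ≤ p ^ 4 := Nat.pow_le_pow_left hp3 4
    have h3 : 3 ^ 3 ≤ p ^ 3 := Nat.pow_le_pow_left hp3 3
    have hh2 : 3 ^ 2 ≤ p ^ 2 := Nat.pow_le_pow_left hp3 2
    omega
  have hβ : 2 ≤ β := by
    by_contra h
    interval_cases β <;> omega
  have hdvd : 25 ∣ p ^ 4 + p ^ 3 + p ^ 2 + p + 1 := by
    rw [heq]
    calc (25 : ℕ) = 5 ^ 2 := by norm_num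
    _ ∣ 5 ^ β := pow_dvd_pow 5 hβ
  have hz : ((p : ZMod 25) ^ 4 + (p : ZMod 25) ^ 3 + (p : ZMod 25) ^ 2 + p + 1) = 0 := by
    have := (ZMod.natCast_eq_zero_iff _ 25).mpr hdvd
    push_cast at this
    exact this
  have : ∀ x : ZMod 25, x ^ 4 + x ^ 3 + x ^ 2 + x + 1 ≠ 0 := by decide
  exact this _ hz
end

section
/- Let p be an odd prime and q ∈ {3, 5} with (p^(λ+1) - 1)/(p - 1) = q^β for some integers λ ≥ 2 with λ even, and β ≥ 1. Then no such p, λ, β exist. -/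
lemma geom_nat (p n : ℕ) (hp : 1 ≤ p) :
    (p - 1) * ∑ i ∈ Finset.range n, p ^ i = p ^ n - 1 := by
  induction n with
  | zero => simp
  | succ n ih =>
      rw [Finset.sum_range_succ, Nat.mul_add, ih]
      have h1 : 1 ≤ p ^ n := Nat.one_le_pow _ _ (by omega)
      have h3 : 1 ≤ p ^ n * p := by nlinarith
      rw [pow_succ]
      zify [h1, hp, h3]
      ring

theorem no_sol_even_lambda (p q l β : ℕ) (hp : p.Prime) (hpodd : Odd p)
    (hq : q = 3 ∨ q = 5) (hl : 2 ≤ l) (hle : Even l) (hβ : 1 ≤ β)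
    (heq : ∑ i ∈ Finset.range (l + 1), p ^ i = q ^ β) : False := by
  have hp3 : 3 ≤ p := by
    have := hp.two_le
    rcases hpodd with ⟨k, hk⟩
    omega
  set n := l + 1 with hn
  have hnodd : Odd n := by rcases hle with ⟨k, hk⟩; exact ⟨k, by omega⟩
  have hqprime : q.Prime := by rcases hq with rfl | rfl <;> norm_num
  haveI : Fact q.Prime := ⟨hqprime⟩
  have hqodd : Odd q := by rcases hq with rfl | rfl <;> decide
  have hgeom : (p - 1) * q ^ β = p ^ n - 1 := by
    rw [← heq]; exact geom_nat p n (by omega)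
  have hpn1 : 1 ≤ p ^ n := Nat.one_le_pow _ _ (by omega)
  have hqdvd : q ∣ p ^ n - 1 := by
    rw [← hgeom]
    exact Dvd.dvd.mul_left (dvd_pow_self q (by omega)) _
  have hpow1 : (p : ZMod q) ^ n = 1 := by
    have h := (ZMod.natCast_eq_natCast_iff _ _ _).mpr
      ((Nat.modEq_iff_dvd' hpn1).mpr hqdvd)
    push_cast at h
    exact h.symm
  have hqndvdp : ¬ q ∣ p := by
    intro hd
    have h1 : q ∣ p ^ n := dvd_pow hd (by omega)
    have h2 : q ∣ p ^ n - (p ^ n - 1) := Nat.dvd_sub h1 hqdvd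
    rw [Nat.sub_sub_self hpn1] at h2
    have := Nat.le_of_dvd one_pos h2
    have := hqprime.two_le
    omega
  have hpne : (p : ZMod q) ≠ 0 := by
    intro h0
    exact hqndvdp ((ZMod.natCast_eq_zero_iff p q).mp h0)
  -- order of p mod q divides both n (odd) and q - 1 (a power of two), so p ≡ 1 mod q
  have hord1 : orderOf (p : ZMod q) ∣ n := orderOf_dvd_of_pow_eq_one hpow1
  have hord2 : orderOf (p : ZMod q) ∣ q - 1 :=
    orderOf_dvd_of_pow_eq_one (ZMod.pow_card_sub_one_eq_one hpne)
  have hcop : Nat.Coprime n (q - 1) := by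
    rcases hq with rfl | rfl
    · exact hnodd.coprime_two_right
    · have h4 : (4 : ℕ) = 2 ^ 2 := by norm_num
      show Nat.Coprime n 4
      rw [h4]
      exact (hnodd.coprime_two_right).pow_right 2
  have hord : orderOf (p : ZMod q) = 1 :=
    Nat.eq_one_of_dvd_coprimes hcop hord1 hord2
  have hp1 : (p : ZMod q) = 1 := orderOf_eq_one_iff.mp hord
  have hqdvdp1 : q ∣ p - 1 := by
    have : p ≡ 1 [MOD q] := by
      have := (ZMod.natCast_eq_natCast_iff p 1 q).mp (by push_cast; exact hp1)
      exact this
    exact (Nat.modEq_iff_dvd' (by omega)).mp this.symm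
  -- lifting the exponent
  have hLTE := Nat.emultiplicity_pow_sub_pow hqprime hqodd
    (x := p) (y := 1) (by simpa using hqdvdp1) hqndvdp n
  simp only [one_pow] at hLTE
  have hmul : emultiplicity q (p ^ n - 1) = emultiplicity q (p - 1) + (β : ℕ∞) := by
    rw [← hgeom, emultiplicity_mul hqprime.prime,
      emultiplicity_pow_self_of_prime hqprime.prime]
  have hfin : FiniteMultiplicity q (p - 1) :=
    Nat.finiteMultiplicity_iff.mpr ⟨hqprime.ne_one, by omega⟩
  have hcancel : (β : ℕ∞) = emultiplicity q n := by
    exact WithTop.add_left_cancel (finiteMultiplicity_iff_emultiplicity_ne_top.mp hfin)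
      (hmul.symm.trans hLTE)
  have hdvdn : q ^ β ∣ n := pow_dvd_of_le_emultiplicity (le_of_eq hcancel)
  have hlen : q ^ β ≤ n := Nat.le_of_dvd (by omega) hdvdn
  have hlt : n < ∑ i ∈ Finset.range n, p ^ i := by
    calc n = ∑ _i ∈ Finset.range n, 1 := by simp
    _ < ∑ i ∈ Finset.range n, p ^ i := by
        apply Finset.sum_lt_sum (fun i _ => Nat.one_le_pow _ _ (by omega))
        exact ⟨1, Finset.mem_range.mpr (by omega), by simpa using (by omega : 1 < p)⟩
  rw [heq] at hlt
  omega
end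

section
/- Let p be an odd prime and q a prime with (p^(λ+1) - 1)/(p - 1) = q^β for integers λ ≥ 6 and β ≥ 1. Then q ≡ 1 (mod λ+1); in particular q > λ. -/
private lemma aux_3pow (k : ℕ) (hk : 2 ≤ k) : 2 * k + 2 < 3 ^ k := by
  induction k, hk using Nat.le_induction with
  | base => norm_num
  | succ n hn ih =>
    have h2 : 3 ^ (n + 1) = 3 * 3 ^ n := by ring
    omega

theorem q_cong_one_mod (p q l β : ℕ) (hp : p.Prime) (hpodd : Odd p)
    (hq : q.Prime) (hl : 6 ≤ l) (hβ : 1 ≤ β)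
    (heq : ∑ i ∈ Finset.range (l + 1), p ^ i = q ^ β) :
    q % (l + 1) = 1 ∧ l < q := by
  haveI : Fact q.Prime := ⟨hq⟩
  set n := l + 1 with hn
  have hp2 : p ≠ 2 := by rintro rfl; rcases hpodd with ⟨k, hk⟩; omega
  have hp3 : 3 ≤ p := by have := hp.two_le; omega
  have hpn1 : 1 ≤ p ^ n := Nat.one_le_pow _ _ (by omega)
  -- (∑ p^i) * (p-1) = p^n - 1 over ℕ
  have hS : (∑ i ∈ Finset.range n, p ^ i) * (p - 1) = p ^ n - 1 := by
    have h := geom_sum_mul (p : ℤ) n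
    zify [show 1 ≤ p by omega, hpn1]
    exact_mod_cast h
  have hdvd : q ^ β ∣ p ^ n - 1 := by rw [← hS, heq]; exact Dvd.intro _ rfl
  have hqS : q ∣ p ^ n - 1 := dvd_trans (dvd_pow_self q (by omega)) hdvd
  have hqp : ¬ q ∣ p := by
    intro h
    have h1 : q ∣ p ^ n := h.trans (dvd_pow_self p (by omega))
    have h2 : q ∣ p ^ n - (p ^ n - 1) := Nat.dvd_sub h1 hqS
    rw [Nat.sub_sub_self hpn1] at h2
    exact hq.one_lt.ne' (Nat.eq_one_of_dvd_one h2 ▸ rfl)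
  have hmod : (p : ZMod q) ^ n = 1 := by
    have h1 : (1 : ℕ) ≡ p ^ n [MOD q] := (Nat.modEq_iff_dvd' hpn1).mpr hqS
    have h2 := (ZMod.natCast_eq_natCast_iff _ _ _).mpr h1.symm
    push_cast at h2
    exact h2
  set d := orderOf ((p : ZMod q)) with hd
  have hdn : d ∣ n := orderOf_dvd_of_pow_eq_one hmod
  have hd0 : d ≠ 0 := by rintro h; rw [h] at hdn; omega
  have hpl_le : p ^ l ≤ q ^ β := by
    rw [← heq]
    exact Finset.single_le_sum (f := fun i => p ^ i) (fun i _ => Nat.zero_le _)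
      (Finset.self_mem_range_succ l)
  rcases eq_or_lt_of_le (Nat.le_of_dvd (by omega) hdn) with hdeq | hdlt
  · -- d = n : then n ∣ q - 1
    have hpne : (p : ZMod q) ≠ 0 := by
      rw [Ne, ZMod.natCast_eq_zero_iff]; exact hqp
    have h1 : n ∣ q - 1 := hdeq ▸ ZMod.orderOf_dvd_card_sub_one hpne
    obtain ⟨k, hk⟩ := h1
    have hq2 : 2 ≤ q := hq.two_le
    have hk1 : 1 ≤ k := by
      rcases Nat.eq_zero_or_pos k with rfl | h
      · simp at hk; omega
      · exact h
    have hqeq : q = n * k + 1 := by omega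
    constructor
    · rw [hqeq, Nat.mul_add_mod]
      exact Nat.mod_eq_of_lt (by omega)
    · nlinarith
  · -- d < n : contradiction
    exfalso
    have hqd : q ∣ p ^ d - 1 := by
      have h1 : (p : ZMod q) ^ d = 1 := pow_orderOf_eq_one _
      have h2 : ((p ^ d : ℕ) : ZMod q) = ((1 : ℕ) : ZMod q) := by push_cast; exact h1
      have h3 := (ZMod.natCast_eq_natCast_iff _ _ _).mp h2
      exact (Nat.modEq_iff_dvd' (Nat.one_le_pow _ _ (by omega))).mp h3.symm
    obtain ⟨m, hm⟩ := hdn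
    have hm2 : 2 ≤ m := by
      rcases Nat.lt_or_ge m 2 with h | h
      · interval_cases m <;> omega
      · exact h
    have hne : p ^ n - 1 ≠ 0 := by
      have : p ≤ p ^ n := Nat.le_self_pow (by omega) p
      omega
    have hβle : β ≤ padicValNat q (p ^ n - 1) :=
      (padicValNat_dvd_iff_le hne).mp hdvd
    have hpd1 : 1 ≤ p ^ d := Nat.one_le_pow _ _ (by omega)
    have hpdpos : 0 < p ^ d - 1 := by
      have : p ≤ p ^ d := Nat.le_self_pow hd0 p
      omega
    rcases hq.eq_two_or_odd' with hq2 | hqodd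
    · -- q = 2
      subst hq2
      have hneven : Even n := by
        have hcast : ((∑ i ∈ Finset.range n, p ^ i : ℕ) : ZMod 2) = (n : ZMod 2) := by
          push_cast
          have hp1 : (p : ZMod 2) = 1 := by
            have := Nat.odd_iff.mp hpodd
            rw [← ZMod.natCast_mod, this]; norm_num
          simp only [hp1, one_pow, Finset.sum_const, Finset.card_range, nsmul_eq_mul, mul_one, hn]
        rw [heq] at hcast
        have h0 : ((2 ^ β : ℕ) : ZMod 2) = 0 := by
          rw [ZMod.natCast_eq_zero_iff]
          exact dvd_pow_self 2 (by omega)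
        rw [h0] at hcast
        have : (2 : ℕ) ∣ n := (ZMod.natCast_eq_zero_iff n 2).mp hcast.symm
        exact even_iff_two_dvd.mpr this
      have hlte := padicValNat.pow_two_sub_pow (x := p) (y := 1)
        (by omega) (by omega) (by omega) (show n ≠ 0 by omega) hneven
      simp only [one_pow] at hlte
      set a := padicValNat 2 (p + 1)
      set b := padicValNat 2 (p - 1)
      set c := padicValNat 2 n
      have ha : 2 ^ a ≤ p + 1 := Nat.le_of_dvd (by omega) pow_padicValNat_dvd
      have hb : 2 ^ b ≤ p - 1 := Nat.le_of_dvd (by omega) pow_padicValNat_dvd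
      have hc : 2 ^ c ≤ n := Nat.le_of_dvd (by omega) pow_padicValNat_dvd
      have h1 : 2 ^ (β + 1) ≤ 2 ^ (a + b + c) :=
        Nat.pow_le_pow_right (by omega) (by omega)
      have h2 : 2 ^ (a + b + c) = 2 ^ a * 2 ^ b * 2 ^ c := by ring
      have h3 : 2 ^ a * 2 ^ b * 2 ^ c ≤ (p + 1) * (p - 1) * n :=
        Nat.mul_le_mul (Nat.mul_le_mul ha hb) hc
      have h4 : (p + 1) * (p - 1) * n ≤ p * p * n := by
        have : (p + 1) * (p - 1) ≤ p * p := by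
          zify [show 1 ≤ p by omega]; nlinarith
        exact Nat.mul_le_mul_right n this
      -- size contradiction
      have hk2 : 2 ≤ l - 2 := by omega
      have haux := aux_3pow (l - 2) hk2
      have hn3 : n < 3 ^ (l - 2) := by omega
      have h5 : 3 ^ (l - 2) ≤ p ^ (l - 2) := Nat.pow_le_pow_left (by omega) _
      have h6 : p * p * n < p * p * p ^ (l - 2) :=
        mul_lt_mul_of_pos_left (lt_of_lt_of_le hn3 h5) (by positivity)
      have h7 : p * p * p ^ (l - 2) = p ^ l := by
        rw [← pow_two, ← pow_add]
        congr 1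
        omega
      have h8 : 2 ^ (β + 1) = 2 * 2 ^ β := by ring
      omega
    · -- q odd
      have hlte := padicValNat.pow_sub_pow (p := q) hqodd (x := p ^ d) (y := 1)
        (by omega) (by omega) (fun h => hqp (hq.dvd_of_dvd_pow h)) (show m ≠ 0 by omega)
      rw [one_pow, ← pow_mul, ← hm] at hlte
      set a := padicValNat q (p ^ d - 1)
      set b := padicValNat q m
      have ha : q ^ a ≤ p ^ d - 1 := Nat.le_of_dvd hpdpos pow_padicValNat_dvd
      have hb : q ^ b ≤ m := Nat.le_of_dvd (by omega) pow_padicValNat_dvd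
      have h1 : q ^ β ≤ q ^ (a + b) := Nat.pow_le_pow_right hq.one_lt.le (by omega)
      have h2 : q ^ (a + b) = q ^ a * q ^ b := pow_add q a b
      have h3 : q ^ a * q ^ b ≤ (p ^ d - 1) * m := Nat.mul_le_mul ha hb
      have hmlen : m ≤ n := Nat.le_of_dvd (by omega) ⟨d, hm.trans (mul_comm d m)⟩
      have h4 : (p ^ d - 1) * m ≤ (p ^ d - 1) * n := Nat.mul_le_mul_left _ hmlen
      have h5 : (p ^ d - 1) * n < p ^ d * n :=
        mul_lt_mul_of_pos_right (by omega) (by omega)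
      have h2d : 2 * d ≤ n := by nlinarith
      have hk2 : 2 ≤ l - d := by omega
      have haux := aux_3pow (l - d) hk2
      have hn3 : n < 3 ^ (l - d) := by omega
      have h6 : 3 ^ (l - d) ≤ p ^ (l - d) := Nat.pow_le_pow_left (by omega) _
      have h7 : p ^ d * n < p ^ d * p ^ (l - d) :=
        mul_lt_mul_of_pos_left (lt_of_lt_of_le hn3 h6) (by positivity)
      have h8 : p ^ d * p ^ (l - d) = p ^ l := by rw [← pow_add]; congr 1; omega
      omega
end

section
/- If N is an odd perfect number and q^α exactly divides N with q prime, then σ(N/q^α)/q^α ≠ 1. -/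
open ArithmeticFunction Finset

private lemma le_sig {n : ℕ} (hn : n ≠ 0) : n ≤ ArithmeticFunction.sigma 1 n := by
  rw [ArithmeticFunction.sigma_one_apply]
  exact Finset.single_le_sum (f := fun i => i) (fun i _ => Nat.zero_le i)
    (Nat.mem_divisors_self n hn)

private lemma S_succ' (q t : ℕ) :
    ∑ i ∈ range (t + 1), q ^ i = 1 + q * ∑ i ∈ range t, q ^ i := by
  rw [Finset.sum_range_succ']
  simp only [pow_zero, pow_succ, Finset.mul_sum]
  rw [add_comm]
  congr 1
  apply Finset.sum_congr rfl
  intro i _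
  ring

private lemma S_geom (q : ℕ) (hq : 1 ≤ q) (t : ℕ) :
    (∑ i ∈ range t, q ^ i) * (q - 1) + 1 = q ^ t := by
  induction t with
  | zero => simp
  | succ n ih =>
    rw [Finset.sum_range_succ, add_mul, pow_succ]
    have h : q ^ n * (q - 1) + q ^ n = q ^ n * q := by
      have : q - 1 + 1 = q := by omega
      rw [← this, Nat.mul_succ, this]
    linarith [ih, h]

private lemma S_parity {q : ℕ} (hodd : q % 2 = 1) (t : ℕ) :
    (∑ i ∈ range t, q ^ i) % 2 = t % 2 := by
  induction t with
  | zero => simp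
  | succ n ih =>
    rw [Finset.sum_range_succ]
    have hp : q ^ n % 2 = 1 := by rw [Nat.pow_mod, hodd, one_pow]; rfl
    omega

private lemma S_two_mul {q : ℕ} (hq : 3 ≤ q) (j : ℕ) :
    ∑ i ∈ range (2 * j), q ^ i = (∑ i ∈ range j, q ^ i) * (q ^ j + 1) := by
  have h1 := S_geom q (by omega) (2 * j)
  have h2 := S_geom q (by omega) j
  have key : ((∑ i ∈ range j, q ^ i) * (q ^ j + 1)) * (q - 1) + 1 = q ^ (2 * j) := by
    have hr : ((∑ i ∈ range j, q ^ i) * (q ^ j + 1)) * (q - 1)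
        = ((∑ i ∈ range j, q ^ i) * (q - 1)) * (q ^ j + 1) := by ring
    have hq2 : q ^ (2 * j) = q ^ j * q ^ j := by rw [two_mul, pow_add]
    rw [hr, hq2, ← h2]
    ring
  have hc : 0 < q - 1 := by omega
  have heq : (∑ i ∈ range (2 * j), q ^ i) * (q - 1)
      = ((∑ i ∈ range j, q ^ i) * (q ^ j + 1)) * (q - 1) := by linarith [h1, key]
  exact Nat.eq_of_mul_eq_mul_right hc heq

theorem opn_ratio_ne_one (N q α : ℕ) (hN : N.Perfect) (hNodd : Odd N)
    (hq : q.Prime) (hα : 1 ≤ α)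
    (hdvd : q ^ α ∣ N) (hndvd : ¬ q ^ (α + 1) ∣ N) :
    (ArithmeticFunction.sigma 1 (N / q ^ α)) / q ^ α ≠ 1 := by
  intro hratio
  have hN0 : 0 < N := hN.2
  set m := N / q ^ α with hmdef
  have hNm : N = q ^ α * m := (Nat.mul_div_cancel' hdvd).symm
  have hm0 : m ≠ 0 := by rintro h; rw [h, mul_zero] at hNm; omega
  have hq2 : 2 ≤ q := hq.two_le
  have hNodd' : N % 2 = 1 := Nat.odd_iff.mp hNodd
  have hqodd : q % 2 = 1 := by
    rcases hq.eq_two_or_odd with h | h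
    · exfalso
      have h2 : (2 : ℕ) ∣ N := by
        subst h; exact dvd_trans (dvd_pow_self 2 (by omega)) hdvd
      omega
    · exact h
  have hq3 : 3 ≤ q := by omega
  have hqm : ¬ q ∣ m := by
    intro h
    exact hndvd (by rw [hNm, pow_succ]; exact mul_dvd_mul_left _ h)
  have hcop : Nat.Coprime (q ^ α) m :=
    Nat.Coprime.pow_left _ ((Nat.Prime.coprime_iff_not_dvd hq).mpr hqm)
  have hmodd : m % 2 = 1 := by
    rcases Nat.even_or_odd m with he | ho
    · exfalso
      have : Even N := by rw [hNm]; exact he.mul_left _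
      rw [Nat.even_iff] at this; omega
    · exact Nat.odd_iff.mp ho
  have hσN : ArithmeticFunction.sigma 1 N = 2 * N := by
    rw [ArithmeticFunction.sigma_one_apply]
    exact (Nat.perfect_iff_sum_divisors_eq_two_mul hN0).mp hN
  have hmul : (ArithmeticFunction.sigma 1 (q ^ α)) * ArithmeticFunction.sigma 1 m
      = 2 * (q ^ α * m) := by
    rw [← ArithmeticFunction.isMultiplicative_sigma.map_mul_of_coprime hcop, ← hNm, hσN]
  have hSq : ArithmeticFunction.sigma 1 (q ^ α) = ∑ i ∈ range (α + 1), q ^ i :=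
    ArithmeticFunction.sigma_one_apply_prime_pow hq
  have hqnd : ¬ q ∣ ArithmeticFunction.sigma 1 (q ^ α) := by
    rw [hSq, S_succ']
    intro h
    have h1 : q ∣ q * ∑ i ∈ range α, q ^ i := Dvd.intro _ rfl
    have h2 : q ∣ 1 := (Nat.dvd_add_right h1).mp (by rwa [add_comm] at h)
    have := Nat.le_of_dvd one_pos h2
    omega
  have hdvdσm : q ^ α ∣ ArithmeticFunction.sigma 1 m := by
    have hd : q ^ α ∣ (ArithmeticFunction.sigma 1 (q ^ α)) * ArithmeticFunction.sigma 1 m := by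
      rw [hmul]; exact ⟨2 * m, by ring⟩
    have hcop2 : Nat.Coprime (q ^ α) (ArithmeticFunction.sigma 1 (q ^ α)) :=
      Nat.Coprime.pow_left _ ((Nat.Prime.coprime_iff_not_dvd hq).mpr hqnd)
    exact hcop2.dvd_of_dvd_mul_left hd
  have hσm : ArithmeticFunction.sigma 1 m = q ^ α := by
    have h := Nat.div_mul_cancel hdvdσm
    rw [hratio, one_mul] at h
    exact h.symm
  have hqαpos : 0 < q ^ α := Nat.pow_pos (n := α) (by omega)
  have hσq2m : ArithmeticFunction.sigma 1 (q ^ α) = 2 * m := by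
    rw [hσm] at hmul
    have h : (ArithmeticFunction.sigma 1 (q ^ α)) * q ^ α = (2 * m) * q ^ α := by
      rw [hmul]; ring
    exact Nat.eq_of_mul_eq_mul_right hqαpos h
  -- α is odd
  have hparS := S_parity hqodd (α + 1)
  have hSsum : (∑ i ∈ range (α + 1), q ^ i) = 2 * m := by rw [← hSq, hσq2m]
  have hαodd : α % 2 = 1 := by omega
  obtain ⟨j, hj⟩ : ∃ j, α + 1 = 2 * j := ⟨(α + 1) / 2, by omega⟩
  have hj1 : 1 ≤ j := by omega
  set A := ∑ i ∈ range j, q ^ i with hA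
  have hABsum : ∑ i ∈ range (α + 1), q ^ i = A * (q ^ j + 1) := by
    rw [hj]; exact S_two_mul hq3 j
  have hqjodd : q ^ j % 2 = 1 := by rw [Nat.pow_mod, hqodd, one_pow]; rfl
  set C := (q ^ j + 1) / 2 with hCdef
  have hC2 : q ^ j + 1 = 2 * C := by omega
  have h2m : 2 * m = A * (2 * C) := by rw [← hC2, ← hABsum, hSsum]
  have hmAC : m = A * C := by
    have h'' : 2 * m = 2 * (A * C) := by rw [h2m]; ring
    omega
  have hApar : A % 2 = j % 2 := S_parity hqodd j
  have hAdvd : A ∣ m := ⟨C, hmAC⟩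
  have hAodd : A % 2 = 1 := by
    rcases Nat.even_or_odd A with he | ho
    · exfalso
      obtain ⟨c, hc⟩ := hAdvd
      rw [Nat.even_iff] at he
      have : m % 2 = 0 := by
        rw [hc, Nat.mul_mod, he]; simp
      omega
    · exact Nat.odd_iff.mp ho
  have hjodd : j % 2 = 1 := by omega
  have hgeomA : A * (q - 1) + 1 = q ^ j := S_geom q (by omega) j
  -- A and C are coprime
  have hcopAC : Nat.Coprime A C := by
    have hdA : Nat.gcd A C ∣ A := Nat.gcd_dvd_left A C
    have hdC : Nat.gcd A C ∣ C := Nat.gcd_dvd_right A C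
    have h1 : Nat.gcd A C ∣ A * (q - 1) := hdA.mul_right _
    have h2 : Nat.gcd A C ∣ 2 * C := hdC.mul_left 2
    rw [← hC2] at h2
    have h3 : q ^ j + 1 = A * (q - 1) + 2 := by omega
    rw [h3] at h2
    have h4 : Nat.gcd A C ∣ 2 := (Nat.dvd_add_right h1).mp h2
    have h5 : Nat.gcd A C = 1 ∨ Nat.gcd A C = 2 :=
      (Nat.dvd_prime Nat.prime_two).mp h4
    rcases h5 with h | h
    · exact h
    · exfalso
      have : (2 : ℕ) ∣ A := h ▸ hdA
      omega
  have hσsplit : ArithmeticFunction.sigma 1 A * ArithmeticFunction.sigma 1 C = q ^ α := by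
    rw [← ArithmeticFunction.isMultiplicative_sigma.map_mul_of_coprime hcopAC, ← hmAC, hσm]
  obtain ⟨a, ha, hσA⟩ := (Nat.dvd_prime_pow hq).mp
    (⟨ArithmeticFunction.sigma 1 C, hσsplit.symm⟩ :
      ArithmeticFunction.sigma 1 A ∣ q ^ α)
  obtain ⟨b, hb, hσC⟩ := (Nat.dvd_prime_pow hq).mp
    (⟨ArithmeticFunction.sigma 1 A, by rw [← hσsplit]; ring⟩ :
      ArithmeticFunction.sigma 1 C ∣ q ^ α)
  have hab : a + b = α := by
    have h : q ^ a * q ^ b = q ^ α := by rw [← hσA, ← hσC, hσsplit]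
    rw [← pow_add] at h
    exact Nat.pow_right_injective hq2 h
  have hApos : A ≠ 0 := by omega
  have hCpos : C ≠ 0 := by
    have : 0 < q ^ j := Nat.pow_pos (n := j) (by omega)
    omega
  rcases eq_or_lt_of_le hj1 with hj1' | hj2
  · -- j = 1, α = 1
    have hα1 : α = 1 := by omega
    have hA1 : A = 1 := by rw [hA, ← hj1']; simp
    have hmC : m = C := by rw [hmAC, hA1, one_mul]
    have hσmq : ArithmeticFunction.sigma 1 m = q := by rw [hσm, hα1, pow_one]
    have h2mq : 2 * m = q + 1 := by
      have := hABsum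
      rw [hA1, one_mul, ← hj1', pow_one] at this
      omega
    have hm1 : m ≠ 1 := by
      intro h
      rw [h, ArithmeticFunction.sigma_one_apply] at hσmq
      simp [Nat.divisors_one] at hσmq
      omega
    set p := m.minFac with hpdef
    have hp : p.Prime := Nat.minFac_prime hm1
    have hpm : p ∣ m := Nat.minFac_dvd m
    have hpodd : p % 2 = 1 := by
      rcases hp.eq_two_or_odd with h | h
      · exfalso
        obtain ⟨c, hc⟩ := hpm
        rw [h] at hc
        omega
      · exact h
    have hp2 : 2 ≤ p := hp.two_le
    have hp3 : 3 ≤ p := by omega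
    set e := m.factorization p with hedef
    have he1 : 1 ≤ e := hp.factorization_pos_of_dvd hm0 hpm
    have hdecomp : p ^ e * (m / p ^ e) = m := Nat.ordProj_mul_ordCompl_eq_self m p
    have hcop3 : Nat.Coprime (p ^ e) (m / p ^ e) :=
      Nat.Coprime.pow_left _ (Nat.coprime_ordCompl hp hm0)
    have hsplit2 : ArithmeticFunction.sigma 1 (p ^ e) *
        ArithmeticFunction.sigma 1 (m / p ^ e) = q := by
      rw [← ArithmeticFunction.isMultiplicative_sigma.map_mul_of_coprime hcop3, hdecomp, hσmq]
    have hσpe_dvd : ArithmeticFunction.sigma 1 (p ^ e) ∣ q :=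
      ⟨ArithmeticFunction.sigma 1 (m / p ^ e), hsplit2.symm⟩
    have hpe0 : p ^ e ≠ 0 := pow_ne_zero e (by omega)
    have hppe : p ≤ p ^ e := Nat.le_self_pow (by omega) p
    have hσpe_gt : 1 < ArithmeticFunction.sigma 1 (p ^ e) := by
      have h2 := le_sig hpe0
      omega
    have hσpe : ArithmeticFunction.sigma 1 (p ^ e) = q := by
      rcases (Nat.Prime.eq_one_or_self_of_dvd hq _ hσpe_dvd) with h | h
      · omega
      · exact h
    have hrest0 : m / p ^ e ≠ 0 := by
      intro h
      rw [h, mul_zero] at hdecomp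
      omega
    have hσrest : ArithmeticFunction.sigma 1 (m / p ^ e) = 1 := by
      rw [hσpe] at hsplit2
      have hqpos : 0 < q := by omega
      have h' : q * ArithmeticFunction.sigma 1 (m / p ^ e) = q * 1 := by
        rw [hsplit2, mul_one]
      exact Nat.eq_of_mul_eq_mul_left hqpos h'
    have hrest1 : m / p ^ e = 1 := by
      have h2 := le_sig hrest0
      rw [hσrest] at h2
      exact Nat.le_antisymm h2 (Nat.one_le_iff_ne_zero.mpr hrest0)
    have hmpe : m = p ^ e := by rw [← hdecomp, hrest1, mul_one]
    have hSp : ArithmeticFunction.sigma 1 (p ^ e) = ∑ i ∈ range (e + 1), p ^ i :=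
      ArithmeticFunction.sigma_one_apply_prime_pow hp
    have hpeel := S_succ' p e
    have h2pe : 2 * p ^ e = 2 + p * ∑ i ∈ range e, p ^ i := by
      have h1 : q = 1 + p * ∑ i ∈ range e, p ^ i := by rw [← hσpe, hSp, hpeel]
      rw [← hmpe]
      omega
    have hpd1 : p ∣ 2 * p ^ e := Dvd.dvd.mul_left (dvd_pow_self p (by omega)) 2
    have hpd2 : p ∣ p * ∑ i ∈ range e, p ^ i := Dvd.intro _ rfl
    have hpd3 : p ∣ 2 := by
      have h := Nat.dvd_sub (h2pe ▸ hpd1) hpd2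
      simpa using h
    have := Nat.le_of_dvd (by omega) hpd3
    omega
  · -- j ≥ 2
    have hi1 : 1 ≤ j - 1 := by omega
    have hSi1 : 1 ≤ ∑ i ∈ range (j - 1), q ^ i := by
      have h0 : (0 : ℕ) ∈ range (j - 1) := by simp; omega
      calc (1 : ℕ) = q ^ 0 := by simp
        _ ≤ ∑ i ∈ range (j - 1), q ^ i :=
          Finset.single_le_sum (f := fun i => q ^ i) (fun i _ => Nat.zero_le _) h0
    have hsplitA : A = ∑ i ∈ range (j - 1), q ^ i + q ^ (j - 1) := by
      rw [hA, show j = (j - 1) + 1 by omega, Nat.add_sub_cancel, Finset.sum_range_succ]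
    have hAgt : q ^ (j - 1) < A := by omega
    have hqq : q ^ j = q ^ (j - 1) * q := by
      rw [← pow_succ]
      congr 1
      omega
    have hmul3 : q ^ (j - 1) * 3 ≤ q ^ (j - 1) * q := Nat.mul_le_mul_left _ hq3
    have hqj1pos : 0 < q ^ (j - 1) := Nat.pow_pos (by omega)
    have hCgt : q ^ (j - 1) < C := by omega
    have hAle : A ≤ q ^ a := by rw [← hσA]; exact le_sig hApos
    have hCle : C ≤ q ^ b := by rw [← hσC]; exact le_sig hCpos
    have haj : j ≤ a := by
      have h : q ^ (j - 1) < q ^ a := by omega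
      have := (pow_lt_pow_iff_right₀ (by omega : 1 < q)).mp h
      omega
    have hbj : j ≤ b := by
      have h : q ^ (j - 1) < q ^ b := by omega
      have := (pow_lt_pow_iff_right₀ (by omega : 1 < q)).mp h
      omega
    omega
end

section
/- If N is an odd perfect number and q^α exactly divides N with q prime, then σ(N/q^α)/q^α ≠ 2. -/
open Finset

private lemma odd_of_dvd {a b : ℕ} (h : a ∣ b) (hb : Odd b) : Odd a := by
  rcases Nat.even_or_odd a with he | ho
  · exfalso
    obtain ⟨k, hk⟩ := he
    obtain ⟨c, hc⟩ := h
    exact (Nat.not_even_iff_odd.mpr hb) ⟨k * c, by rw [hc, hk]; ring⟩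
  · exact ho

private lemma sigma_pp {p : ℕ} (hp : p.Prime) (n : ℕ) :
    ArithmeticFunction.sigma 1 (p ^ n) = ∑ i ∈ range (n + 1), p ^ i :=
  ArithmeticFunction.sigma_one_apply_prime_pow hp

private lemma geom_parity {r : ℕ} (hr : r % 2 = 1) :
    ∀ e, (∑ i ∈ range (e + 1), r ^ i) % 2 = (e + 1) % 2 := by
  intro e
  induction e with
  | zero => simp
  | succ e ih =>
    rw [Finset.sum_range_succ]
    have h1 : r ^ (e + 1) % 2 = 1 := by
      simp [Nat.pow_mod, hr]
    omega

private lemma geom_lb {r e : ℕ} (hr : 2 ≤ r) (he : 1 ≤ e) :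
    1 + r ≤ ∑ i ∈ range (e + 1), r ^ i := by
  have h : ∑ i ∈ range 2, r ^ i ≤ ∑ i ∈ range (e + 1), r ^ i := by
    apply Finset.sum_le_sum_of_subset
    intro x hx
    simp only [Finset.mem_range] at hx ⊢
    omega
  simpa [Finset.sum_range_succ] using h

private lemma geom_pair (r : ℕ) : ∀ w, ∑ i ∈ range (2 * w), r ^ i
    = (r + 1) * ∑ j ∈ range w, r ^ (2 * j) := by
  intro w
  induction w with
  | zero => simp
  | succ w ih =>
    have h2 : 2 * (w + 1) = (2 * w) + 1 + 1 := by ring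
    rw [h2, Finset.sum_range_succ, Finset.sum_range_succ, ih, Finset.sum_range_succ]
    ring

private lemma geom_zmod {q r e : ℕ} (h : q ∣ ∑ i ∈ range (e + 1), r ^ i) :
    ((r : ZMod q)) ^ (e + 1) = 1 := by
  have h0 : ((∑ i ∈ range (e + 1), r ^ i : ℕ) : ZMod q) = 0 :=
    (ZMod.natCast_eq_zero_iff _ _).mpr h
  push_cast at h0
  have h2 := geom_sum_mul ((r : ZMod q)) (e + 1)
  rw [h0, zero_mul] at h2
  have h3 := h2.symm
  rwa [sub_eq_zero] at h3

/-- If σ(m) divides a power of the odd prime q, then m^E ≡ 1 (mod q) for some odd E. -/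
private lemma lemA {q : ℕ} (hq : q.Prime) (hqodd : Odd q) :
    ∀ m, 0 < m → Odd m → ∀ C, ArithmeticFunction.sigma 1 m ∣ q ^ C →
    ∃ E, Odd E ∧ ((m : ZMod q)) ^ E = 1 := by
  intro m
  induction m using Nat.strong_induction_on with
  | _ m IH =>
    intro hm0 hmodd C hdvd
    by_cases h1 : m = 1
    · exact ⟨1, odd_one, by simp [h1]⟩
    · set r := m.minFac with hrdef
      have hr : r.Prime := Nat.minFac_prime h1
      set e := m.factorization r with hedef
      have he : 0 < e := hr.factorization_pos_of_dvd hm0.ne' (Nat.minFac_dvd m)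
      set m' := m / r ^ e with hm'def
      have hsplit : r ^ e * m' = m := Nat.ordProj_mul_ordCompl_eq_self m r
      have hnd : ¬ r ∣ m' := Nat.not_dvd_ordCompl hr hm0.ne'
      have hm'dvd : m' ∣ m := Nat.ordCompl_dvd m r
      have hm'0 : 0 < m' := Nat.ordCompl_pos r hm0.ne'
      have hm'odd : Odd m' := odd_of_dvd hm'dvd hmodd
      have hrodd : Odd r := odd_of_dvd (Nat.minFac_dvd m) hmodd
      have hcop : Nat.Coprime (r ^ e) m' := ((hr.coprime_iff_not_dvd).mpr hnd).pow_left e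
      have hσmul : ArithmeticFunction.sigma 1 m
          = ArithmeticFunction.sigma 1 (r ^ e) * ArithmeticFunction.sigma 1 m' := by
        rw [← hsplit]
        exact ArithmeticFunction.isMultiplicative_sigma.map_mul_of_coprime hcop
      have hd1 : ArithmeticFunction.sigma 1 (r ^ e) ∣ q ^ C := by
        refine dvd_trans ?_ hdvd
        rw [hσmul]; exact dvd_mul_right _ _
      obtain ⟨i, hiC, hieq⟩ := (Nat.dvd_prime_pow hq).mp hd1
      have hgeom : ArithmeticFunction.sigma 1 (r ^ e) = ∑ j ∈ range (e + 1), r ^ j :=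
        sigma_pp hr e
      have hlb : 1 + r ≤ ArithmeticFunction.sigma 1 (r ^ e) := by
        rw [hgeom]; exact geom_lb hr.two_le he
      have hine : i ≠ 0 := by
        rintro rfl
        rw [pow_zero] at hieq
        have := hr.two_le
        omega
      have hqd : q ∣ ArithmeticFunction.sigma 1 (r ^ e) := by
        rw [hieq]; exact dvd_pow_self q hine
      have hx : ((r : ZMod q)) ^ (e + 1) = 1 := geom_zmod (hgeom ▸ hqd)
      have heodd : Odd (e + 1) := by
        have hpar : (ArithmeticFunction.sigma 1 (r ^ e)) % 2 = (e + 1) % 2 := by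
          rw [hgeom]; exact geom_parity (Nat.odd_iff.mp hrodd) e
        have hodd : (ArithmeticFunction.sigma 1 (r ^ e)) % 2 = 1 := by
          rw [hieq]; exact Nat.odd_iff.mp hqodd.pow
        exact Nat.odd_iff.mpr (by omega)
      have hlt : m' < m := by
        rw [hm'def]
        exact Nat.div_lt_self hm0 (Nat.one_lt_pow he.ne' hr.one_lt)
      have hd2 : ArithmeticFunction.sigma 1 m' ∣ q ^ C := by
        refine dvd_trans ?_ hdvd
        rw [hσmul]; exact dvd_mul_left _ _
      obtain ⟨E', hE'odd, hE'⟩ := IH m' hlt hm'0 hm'odd C hd2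
      refine ⟨(e + 1) * E', heodd.mul hE'odd, ?_⟩
      have hcast : ((m : ZMod q)) = ((r : ZMod q)) ^ e * ((m' : ZMod q)) := by
        rw [← hsplit]; push_cast; ring
      rw [hcast, mul_pow, ← pow_mul]
      have e1 : e * ((e + 1) * E') = (e + 1) * (e * E') := by ring
      rw [e1, pow_mul, hx, one_pow, one_mul, mul_comm (e+1) E', pow_mul, hE', one_pow]

/-- If σ(m) = 2·q^C with q an odd prime, then m^E ≡ -1 (mod q) for some odd E. -/
private lemma lemB {q : ℕ} (hq : q.Prime) (hqodd : Odd q) :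
    ∀ m, 0 < m → Odd m → ∀ C, ArithmeticFunction.sigma 1 m = 2 * q ^ C →
    ∃ E, Odd E ∧ ((m : ZMod q)) ^ E = -1 := by
  intro m
  induction m using Nat.strong_induction_on with
  | _ m IH =>
    intro hm0 hmodd C hσ
    by_cases h1 : m = 1
    · exfalso
      rw [h1] at hσ
      simp [ArithmeticFunction.sigma_one_apply] at hσ
      have := pow_pos hq.pos C
      omega
    · set r := m.minFac with hrdef
      have hr : r.Prime := Nat.minFac_prime h1
      set e := m.factorization r with hedef
      have he : 0 < e := hr.factorization_pos_of_dvd hm0.ne' (Nat.minFac_dvd m)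
      set m' := m / r ^ e with hm'def
      have hsplit : r ^ e * m' = m := Nat.ordProj_mul_ordCompl_eq_self m r
      have hnd : ¬ r ∣ m' := Nat.not_dvd_ordCompl hr hm0.ne'
      have hm'dvd : m' ∣ m := Nat.ordCompl_dvd m r
      have hm'0 : 0 < m' := Nat.ordCompl_pos r hm0.ne'
      have hm'odd : Odd m' := odd_of_dvd hm'dvd hmodd
      have hrodd : Odd r := odd_of_dvd (Nat.minFac_dvd m) hmodd
      have hr3 : 3 ≤ r := by
        have := hr.two_le
        rcases hrodd with ⟨k, hk⟩
        omega
      have hcop : Nat.Coprime (r ^ e) m' := ((hr.coprime_iff_not_dvd).mpr hnd).pow_left e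
      have hσmul : ArithmeticFunction.sigma 1 m
          = ArithmeticFunction.sigma 1 (r ^ e) * ArithmeticFunction.sigma 1 m' := by
        rw [← hsplit]
        exact ArithmeticFunction.isMultiplicative_sigma.map_mul_of_coprime hcop
      have hgeom : ArithmeticFunction.sigma 1 (r ^ e) = ∑ j ∈ range (e + 1), r ^ j :=
        sigma_pp hr e
      have hlb : 1 + r ≤ ArithmeticFunction.sigma 1 (r ^ e) := by
        rw [hgeom]; exact geom_lb hr.two_le he
      have hlt : m' < m := by
        rw [hm'def]
        exact Nat.div_lt_self hm0 (Nat.one_lt_pow he.ne' hr.one_lt)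
      have hcast : ((m : ZMod q)) = ((r : ZMod q)) ^ e * ((m' : ZMod q)) := by
        rw [← hsplit]; push_cast; ring
      by_cases hev : Even (ArithmeticFunction.sigma 1 (r ^ e))
      · -- the even component: r ≡ -1 mod q, e odd
        obtain ⟨u, hu⟩ := hev
        have hu2 : ArithmeticFunction.sigma 1 (r ^ e) = 2 * u := by omega
        have hkey : u * ArithmeticFunction.sigma 1 m' = q ^ C := by
          have h2 : 2 * (u * ArithmeticFunction.sigma 1 m') = 2 * q ^ C := by
            rw [← hσ, hσmul, hu2]; ring
          omega
        have heodd : Odd e := by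
          have hpar : (ArithmeticFunction.sigma 1 (r ^ e)) % 2 = (e + 1) % 2 := by
            rw [hgeom]; exact geom_parity (Nat.odd_iff.mp hrodd) e
          have : (ArithmeticFunction.sigma 1 (r ^ e)) % 2 = 0 := by omega
          exact Nat.odd_iff.mpr (by omega)
        obtain ⟨w', hw'⟩ := id heodd
        have hpair : ArithmeticFunction.sigma 1 (r ^ e)
            = (r + 1) * ∑ j ∈ range (w' + 1), r ^ (2 * j) := by
          rw [hgeom, show e + 1 = 2 * (w' + 1) by omega, geom_pair]
        obtain ⟨k, hk⟩ := id hrodd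
        have hfac : 2 * u = 2 * ((k + 1) * ∑ j ∈ range (w' + 1), r ^ (2 * j)) := by
          rw [← hu2, hpair, hk]; ring
        have hueq : u = (k + 1) * ∑ j ∈ range (w' + 1), r ^ (2 * j) := by omega
        have hhd : (k + 1) ∣ q ^ C := by
          rw [← hkey, hueq]
          exact (dvd_mul_right (k + 1) _).mul_right _
        obtain ⟨j, hjC, hjeq⟩ := (Nat.dvd_prime_pow hq).mp hhd
        have hjne : j ≠ 0 := by
          rintro rfl
          rw [pow_zero] at hjeq
          omega
        have hqk : q ∣ k + 1 := by rw [hjeq]; exact dvd_pow_self q hjne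
        have hqr1 : q ∣ r + 1 := by
          refine dvd_trans hqk ⟨2, ?_⟩
          omega
        have hrneg : ((r : ZMod q)) = -1 := by
          have h0 : (((r + 1 : ℕ)) : ZMod q) = 0 :=
            (ZMod.natCast_eq_zero_iff _ _).mpr hqr1
          push_cast at h0
          exact eq_neg_of_add_eq_zero_left h0
        have hσm'd : ArithmeticFunction.sigma 1 m' ∣ q ^ C := Dvd.intro_left u hkey
        obtain ⟨E', hE'odd, hE'⟩ := lemA hq hqodd m' hm'0 hm'odd C hσm'd
        refine ⟨E', hE'odd, ?_⟩
        rw [hcast, mul_pow, hE', mul_one, ← pow_mul, hrneg]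
        exact Odd.neg_one_pow (heodd.mul hE'odd)
      · -- odd component: recurse
        have hd1 : ArithmeticFunction.sigma 1 (r ^ e) ∣ 2 * q ^ C := by
          rw [← hσ, hσmul]; exact dvd_mul_right _ _
        have hcop2 : Nat.Coprime (ArithmeticFunction.sigma 1 (r ^ e)) 2 := by
          exact Nat.coprime_two_right.mpr (Nat.not_even_iff_odd.mp hev)
        have hd1' : ArithmeticFunction.sigma 1 (r ^ e) ∣ q ^ C :=
          hcop2.dvd_of_dvd_mul_left hd1
        obtain ⟨i, hiC, hieq⟩ := (Nat.dvd_prime_pow hq).mp hd1'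
        have hine : i ≠ 0 := by
          rintro rfl
          rw [pow_zero] at hieq
          have := hr.two_le
          omega
        have hqd : q ∣ ArithmeticFunction.sigma 1 (r ^ e) := by
          rw [hieq]; exact dvd_pow_self q hine
        have hx : ((r : ZMod q)) ^ (e + 1) = 1 := geom_zmod (hgeom ▸ hqd)
        have heeven : Even e := by
          have hpar : (ArithmeticFunction.sigma 1 (r ^ e)) % 2 = (e + 1) % 2 := by
            rw [hgeom]; exact geom_parity (Nat.odd_iff.mp hrodd) e
          have hodd : (ArithmeticFunction.sigma 1 (r ^ e)) % 2 = 1 := by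
            rw [hieq]; exact Nat.odd_iff.mp hqodd.pow
          exact Nat.even_iff.mpr (by omega)
        have hEq : q ^ i * ArithmeticFunction.sigma 1 m' = 2 * q ^ C := by
          rw [← hieq, ← hσmul, hσ]
        have hiLe : i ≤ C := by
          have hqi2 : q ^ i ∣ 2 * q ^ C := ⟨_, hEq.symm⟩
          have hcop3 : Nat.Coprime (q ^ i) 2 := by
            exact Nat.coprime_two_right.mpr hqodd.pow
          have : q ^ i ∣ q ^ C := hcop3.dvd_of_dvd_mul_left hqi2
          exact (Nat.pow_dvd_pow_iff_le_right hq.one_lt).mp this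
        obtain ⟨j, hj⟩ : ∃ j, C = i + j := ⟨C - i, by omega⟩
        have hm'σ : ArithmeticFunction.sigma 1 m' = 2 * q ^ j := by
          refine Nat.eq_of_mul_eq_mul_left (pow_pos hq.pos i) ?_
          calc q ^ i * ArithmeticFunction.sigma 1 m' = 2 * q ^ C := hEq
            _ = q ^ i * (2 * q ^ j) := by rw [hj, pow_add]; ring
        obtain ⟨E', hE'odd, hE'⟩ := IH m' hlt hm'0 hm'odd j hm'σ
        have heodd1 : Odd (e + 1) := Even.add_one heeven
        refine ⟨(e + 1) * E', heodd1.mul hE'odd, ?_⟩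
        rw [hcast, mul_pow, ← pow_mul]
        have e1 : e * ((e + 1) * E') = (e + 1) * (e * E') := by ring
        rw [e1, pow_mul, hx, one_pow, one_mul, mul_comm (e+1) E', pow_mul, hE']
        exact Odd.neg_one_pow heodd1

theorem opn_ratio_ne_two (N q α : ℕ) (hN : N.Perfect) (hNodd : Odd N)
    (hq : q.Prime) (hα : 1 ≤ α)
    (hdvd : q ^ α ∣ N) (hndvd : ¬ q ^ (α + 1) ∣ N) :
    (ArithmeticFunction.sigma 1 (N / q ^ α)) / q ^ α ≠ 2 := by
  intro h2
  have N0 : 0 < N := hN.2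
  have hσN : ArithmeticFunction.sigma 1 N = 2 * N := by
    rw [ArithmeticFunction.sigma_one_apply]
    exact (Nat.perfect_iff_sum_divisors_eq_two_mul N0).mp hN
  have hqN : q ∣ N := dvd_trans (dvd_pow_self q (by omega : α ≠ 0)) hdvd
  have hqodd : Odd q := by
    rcases Nat.even_or_odd q with hev | h
    · exfalso
      obtain ⟨c, hc⟩ := hqN
      obtain ⟨k, hk⟩ := hev
      exact (Nat.not_even_iff_odd.mpr hNodd) ⟨k * c, by rw [hc, hk]; ring⟩
    · exact h
  set m := N / q ^ α with hmdef
  have hqm : q ^ α * m = N := Nat.mul_div_cancel' hdvd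
  have hqndm : ¬ q ∣ m := by
    rintro ⟨t, ht⟩
    exact hndvd ⟨t, by rw [← hqm, ht]; ring⟩
  have m0 : 0 < m := by
    rcases Nat.eq_zero_or_pos m with h | h
    · rw [h, mul_zero] at hqm; omega
    · exact h
  have hmodd : Odd m := odd_of_dvd ⟨q ^ α, by rw [← hqm]; ring⟩ hNodd
  have hcop : Nat.Coprime (q ^ α) m := ((hq.coprime_iff_not_dvd).mpr hqndm).pow_left α
  have hmul : ArithmeticFunction.sigma 1 (q ^ α) * ArithmeticFunction.sigma 1 m
      = 2 * (q ^ α * m) := by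
    rw [← ArithmeticFunction.isMultiplicative_sigma.map_mul_of_coprime hcop, hqm, hσN]
  have hσgeom : ArithmeticFunction.sigma 1 (q ^ α) = ∑ i ∈ range (α + 1), q ^ i :=
    sigma_pp hq α
  have hqnd : ¬ q ∣ ArithmeticFunction.sigma 1 (q ^ α) := by
    rw [hσgeom, geom_sum_succ]
    intro hctr
    have h1 : q ∣ q * ∑ i ∈ range α, q ^ i := dvd_mul_right _ _
    have h2 : q ∣ 1 := (Nat.dvd_add_right h1).mp hctr
    have h3 := Nat.eq_one_of_dvd_one h2
    have := hq.one_lt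
    omega
  have hcopσ : Nat.Coprime (q ^ α) (ArithmeticFunction.sigma 1 (q ^ α)) :=
    ((hq.coprime_iff_not_dvd).mpr hqnd).pow_left α
  have hdσm : q ^ α ∣ ArithmeticFunction.sigma 1 m := by
    refine hcopσ.dvd_of_dvd_mul_left ?_
    rw [hmul]
    exact ⟨2 * m, by ring⟩
  have hσm2 : ArithmeticFunction.sigma 1 m = q ^ α * 2 := Nat.eq_mul_of_div_eq_right hdσm h2
  have hmeq : ArithmeticFunction.sigma 1 (q ^ α) = m := by
    have hpos : 0 < 2 * q ^ α := by have := pow_pos hq.pos α; omega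
    refine Nat.eq_of_mul_eq_mul_left hpos ?_
    calc (2 * q ^ α) * ArithmeticFunction.sigma 1 (q ^ α)
        = ArithmeticFunction.sigma 1 (q ^ α) * (q ^ α * 2) := by ring
      _ = ArithmeticFunction.sigma 1 (q ^ α) * ArithmeticFunction.sigma 1 m := by rw [hσm2]
      _ = 2 * (q ^ α * m) := hmul
      _ = (2 * q ^ α) * m := by ring
  have hm1 : ((m : ZMod q)) = 1 := by
    rw [← hmeq, hσgeom, geom_sum_succ]
    push_cast
    simp [ZMod.natCast_self]
  obtain ⟨E, hEodd, hE⟩ := lemB hq hqodd m m0 hmodd α (by rw [hσm2]; ring)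
  rw [hm1, one_pow] at hE
  have h20 : ((2 : ℕ) : ZMod q) = 0 := by
    push_cast
    linear_combination hE
  have hq2' : q ∣ 2 := (ZMod.natCast_eq_zero_iff 2 q).mp h20
  have h2le := Nat.le_of_dvd (by norm_num) hq2'
  obtain ⟨k, hk⟩ := hqodd
  have := hq.two_le
  omega
end

section
/- If N is an odd perfect number and q^α exactly divides N with q prime, then σ(N/q^α)/q^α is an odd integer or twice an odd integer; in particular 4 does not divide σ(N/q^α)/q^α. -/
theorem opn_ratio_not_four_dvd (N q α : ℕ) (hN : N.Perfect) (hNodd : Odd N)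
    (hq : q.Prime) (hα : 1 ≤ α)
    (hdvd : q ^ α ∣ N) (hndvd : ¬ q ^ (α + 1) ∣ N) :
    (Odd ((ArithmeticFunction.sigma 1 (N / q ^ α)) / q ^ α) ∨
      ∃ t : ℕ, Odd t ∧ (ArithmeticFunction.sigma 1 (N / q ^ α)) / q ^ α = 2 * t) ∧
    ¬ 4 ∣ (ArithmeticFunction.sigma 1 (N / q ^ α)) / q ^ α := by
  set m := N / q ^ α with hm
  have hNpos : 0 < N := hN.2
  have hNm : N = q ^ α * m := (Nat.mul_div_cancel' hdvd).symm
  have hqm : ¬ q ∣ m := by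
    intro h
    apply hndvd
    rw [pow_succ, hNm]
    exact mul_dvd_mul_left _ h
  have hcop : Nat.Coprime (q ^ α) m :=
    Nat.Coprime.pow_left α ((hq.coprime_iff_not_dvd).mpr hqm)
  have hσN : ArithmeticFunction.sigma 1 N = 2 * N := by
    rw [ArithmeticFunction.sigma_one_apply]
    exact (Nat.perfect_iff_sum_divisors_eq_two_mul hNpos).mp hN
  have hmul : ArithmeticFunction.sigma 1 N
      = ArithmeticFunction.sigma 1 (q ^ α) * ArithmeticFunction.sigma 1 m := by
    conv_lhs => rw [hNm]
    exact ArithmeticFunction.isMultiplicative_sigma.map_mul_of_coprime hcop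
  have hkey : ArithmeticFunction.sigma 1 (q ^ α) * ArithmeticFunction.sigma 1 m
      = 2 * (q ^ α * m) := by rw [← hmul, hσN, ← hNm]
  have hσq : ArithmeticFunction.sigma 1 (q ^ α) = ∑ i ∈ Finset.range (α + 1), q ^ i := by
    rw [ArithmeticFunction.sigma_one_apply, Nat.sum_divisors_prime_pow hq]
  have hqσ : ¬ q ∣ ArithmeticFunction.sigma 1 (q ^ α) := by
    intro h
    rw [hσq, Finset.sum_range_succ'] at h
    have hd : q ∣ ∑ i ∈ Finset.range α, q ^ (i + 1) :=
      Finset.dvd_sum fun i _ => dvd_pow_self q (Nat.succ_ne_zero i)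
    have h1 : q ∣ 1 := by
      have := (Nat.dvd_add_right hd).mp h
      simpa using this
    exact hq.one_lt.ne' (Nat.dvd_one.mp h1)
  have hcopσ : Nat.Coprime (q ^ α) (ArithmeticFunction.sigma 1 (q ^ α)) :=
    Nat.Coprime.pow_left α ((hq.coprime_iff_not_dvd).mpr hqσ)
  have hdvdσ : q ^ α ∣ ArithmeticFunction.sigma 1 m := by
    have h2 : q ^ α ∣ ArithmeticFunction.sigma 1 (q ^ α) * ArithmeticFunction.sigma 1 m := by
      rw [hkey]; exact ⟨2 * m, by ring⟩
    exact (Nat.Coprime.dvd_of_dvd_mul_left hcopσ h2)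
  set r := ArithmeticFunction.sigma 1 m / q ^ α with hr
  have hσm : ArithmeticFunction.sigma 1 m = q ^ α * r := (Nat.mul_div_cancel' hdvdσ).symm
  have hqpos : 0 < q ^ α := pow_pos hq.pos α
  have hkey2 : ArithmeticFunction.sigma 1 (q ^ α) * r = 2 * m := by
    have : q ^ α * (ArithmeticFunction.sigma 1 (q ^ α) * r) = q ^ α * (2 * m) := by
      rw [hσm] at hkey; linarith [hkey]
    exact Nat.eq_of_mul_eq_mul_left hqpos this
  have hmodd : Odd m := by
    rcases Nat.even_or_odd m with he | ho
    · exact absurd (hNm ▸ he.mul_left (q ^ α)) (Nat.not_even_iff_odd.mpr hNodd)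
    · exact ho
  have h4 : ¬ 4 ∣ r := by
    rintro ⟨s, hs⟩
    have h2m : 2 * m = 2 * (2 * (ArithmeticFunction.sigma 1 (q ^ α) * s)) := by
      rw [← hkey2, hs]; ring
    have hme : m = 2 * (ArithmeticFunction.sigma 1 (q ^ α) * s) := by omega
    rw [Nat.odd_iff] at hmodd
    omega
  refine ⟨?_, h4⟩
  rcases Nat.even_or_odd r with he | ho
  · rcases he with ⟨t, ht⟩
    refine Or.inr ⟨t, ?_, by omega⟩
    rw [Nat.odd_iff]
    omega
  · exact Or.inl ho
end
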